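/- arXiv:1202.3113 — 8 statements merged into one kernel-verified Lean document; each statement's English description precedes it below -/
import Mathlib

section
/- There exist universal constants C, C' ≥ 1 such that for all real numbers γ > 0 and ε > 0 and every μ on the unit circle 𝕋 with γ < |μ - 1| < ε, for every ν ∈ 𝕋 there exists an integer p with 1 ≤ p ≤ ⌊C'/γ⌋ such that |μ^p - ν| ≤ C·ε. -/
open Real Complex

lemma abs_exp_I_sub_one (x : ℝ) :
    ‖Complex.exp (x * Complex.I) - 1‖ = 2 * |Real.sin (x / 2)| := by
  have h1 : Complex.exp (x * Complex.I) - 1 =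
      Complex.mk (Real.cos x - 1) (Real.sin x) := by
    rw [Complex.exp_mul_I]
    apply Complex.ext <;> simp [Complex.cos_ofReal_re, Complex.sin_ofReal_re]
  rw [h1, Complex.norm_def, Complex.normSq_mk]
  have h2 : (Real.cos x - 1) * (Real.cos x - 1) + Real.sin x * Real.sin x
      = (2 * |Real.sin (x / 2)|) ^ 2 := by
    have hs : Real.sin (x/2) ^ 2 = 1/2 - Real.cos (2 * (x/2)) / 2 :=
      Real.sin_sq_eq_half_sub (x/2)
    have h2x : (2 : ℝ) * (x/2) = x := by ring
    rw [h2x] at hs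
    have hc := Real.sin_sq_add_cos_sq x
    nlinarith [_root_.sq_abs (Real.sin (x/2))]
  rw [h2, Real.sqrt_sq (by positivity)]

lemma key_lemma {γ ε : ℝ} (hγ : 0 < γ) (hε : 0 < ε) {μ : ℂ} (hμ : ‖μ‖ = 1)
    (harg : 0 < μ.arg) (h1 : γ < ‖μ - 1‖) (h2 : ‖μ - 1‖ < ε)
    {ν : ℂ} (hν : ‖ν‖ = 1) :
    ∃ p : ℕ, 1 ≤ p ∧ (p : ℝ) ≤ 10 / γ ∧ ‖μ ^ p - ν‖ ≤ 2 * ε := by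
  set θ := μ.arg with hθ
  have hθpi : θ ≤ π := Complex.arg_le_pi μ
  have hμexp : Complex.exp (θ * Complex.I) = μ := by
    have := Complex.norm_mul_exp_arg_mul_I μ
    rwa [hμ, Complex.ofReal_one, one_mul] at this
  have habs : ‖μ - 1‖ = 2 * Real.sin (θ / 2) := by
    rw [← hμexp, abs_exp_I_sub_one,
      _root_.abs_of_nonneg (Real.sin_nonneg_of_nonneg_of_le_pi (by linarith) (by linarith))]
  -- γ < θ
  have hsinle : Real.sin (θ / 2) ≤ θ / 2 := Real.sin_le (by linarith)
  have hγθ : γ < θ := by rw [habs] at h1; linarith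
  -- θ < (π/2) * ε
  have hjordan : 2 / π * (θ / 2) ≤ Real.sin (θ / 2) :=
    Real.mul_le_sin (by linarith) (by linarith)
  have hπ : (0:ℝ) < π := Real.pi_pos
  have hθε : θ < π / 2 * ε := by
    rw [habs] at h2
    have : 2 * (2 / π * (θ / 2)) ≤ 2 * Real.sin (θ / 2) := by linarith
    have h4 : 2 * θ / π < ε := by
      calc 2 * θ / π = 2 * (2 / π * (θ / 2)) := by field_simp
        _ ≤ 2 * Real.sin (θ / 2) := this
        _ < ε := h2
    calc θ = π / 2 * (2 * θ / π) := by field_simp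
      _ < π / 2 * ε := by
          apply mul_lt_mul_of_pos_left h4 (by linarith)
  -- the target angle t ∈ (0, 2π]
  set s := ν.arg with hs
  have hνexp : Complex.exp (s * Complex.I) = ν := by
    have := Complex.norm_mul_exp_arg_mul_I ν
    rwa [hν, Complex.ofReal_one, one_mul] at this
  set t : ℝ := if s ≤ 0 then s + 2 * π else s with ht
  have hspi : s ≤ π := Complex.arg_le_pi ν
  have hsneg : -π < s := Complex.neg_pi_lt_arg ν
  have htpos : 0 < t := by
    rw [ht]; split_ifs with h <;> [linarith; linarith]
  have htle : t ≤ 2 * π := by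
    rw [ht]; split_ifs with h <;> [linarith; linarith]
  have htexp : Complex.exp (t * Complex.I) = ν := by
    rw [ht]; split_ifs with h
    · push_cast
      rw [add_mul, Complex.exp_add, hνexp, Complex.exp_two_pi_mul_I, mul_one]
    · exact hνexp
  -- choose p
  have hθ0 : (0:ℝ) < θ := harg
  set p : ℕ := ⌈t / θ⌉.toNat with hp
  have hceil : (1:ℤ) ≤ ⌈t / θ⌉ := by
    apply Int.one_le_ceil_iff.mpr
    positivity
  have hpceil : (p : ℤ) = ⌈t / θ⌉ := Int.toNat_of_nonneg (by linarith)
  have hp1 : 1 ≤ p := by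
    have h' : (1:ℤ) ≤ (p:ℤ) := hpceil ▸ hceil
    exact_mod_cast h'
  refine ⟨p, ?_, ?_, ?_⟩
  · exact hp1
  · -- p ≤ 10/γ
    have h2γ : γ < 2 := by
      have hle : ‖μ - 1‖ ≤ 2 := by
        calc ‖μ - 1‖ ≤ ‖μ‖ + ‖(1:ℂ)‖ :=
              norm_sub_le _ _
          _ = 2 := by rw [hμ]; simp; norm_num
      linarith
    have hpup : (p : ℝ) ≤ t / θ + 1 := by
      have := Int.ceil_lt_add_one (t / θ)
      have hcast : ((p : ℤ) : ℝ) = ((⌈t / θ⌉ : ℤ) : ℝ) := by exact_mod_cast hpceil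
      push_cast at hcast ⊢
      rw [hcast]
      linarith [Int.ceil_lt_add_one (t / θ)]
    have h1 : t / θ ≤ 2 * π / θ := by gcongr
    have h2π : 2 * π / θ ≤ 2 * π / γ := by gcongr
    have hone : (1:ℝ) ≤ 2 / γ := by
      rw [le_div_iff₀ hγ]; linarith
    have hπlt : π < 3.15 := by
      have := Real.pi_lt_d2; linarith
    calc (p:ℝ) ≤ t / θ + 1 := hpup
      _ ≤ 2 * π / γ + 2 / γ := by linarith [h1.trans h2π]
      _ = (2 * π + 2) / γ := by ring
      _ ≤ 10 / γ := by gcongr; linarith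
  · -- the estimate
    have hplow : t / θ ≤ (p : ℝ) := by
      have hcast : ((p : ℤ) : ℝ) = ((⌈t / θ⌉ : ℤ) : ℝ) := by exact_mod_cast hpceil
      push_cast at hcast
      rw [hcast]
      exact Int.le_ceil _
    have hphigh : (p : ℝ) < t / θ + 1 := by
      have hcast : ((p : ℤ) : ℝ) = ((⌈t / θ⌉ : ℤ) : ℝ) := by exact_mod_cast hpceil
      push_cast at hcast
      rw [hcast]
      exact Int.ceil_lt_add_one _
    have hlow : t ≤ p * θ := by
      rw [div_le_iff₀ hθ0] at hplow; linarith
    have hhigh : (p:ℝ) * θ < t + θ := by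
      have h := mul_lt_mul_of_pos_right hphigh hθ0
      rw [add_mul, div_mul_cancel₀ _ (ne_of_gt hθ0), one_mul] at h
      exact h
    have hkey : μ ^ p - ν =
        Complex.exp (↑t * Complex.I) * (Complex.exp (↑((p:ℝ) * θ - t) * Complex.I) - 1) := by
      rw [← hμexp, ← htexp, mul_sub, mul_one, ← Complex.exp_add, ← Complex.exp_nat_mul]
      congr 1
      push_cast
      ring
    rw [hkey, norm_mul, Complex.norm_exp_ofReal_mul_I, one_mul, abs_exp_I_sub_one]
    have hsin : |Real.sin (((p:ℝ) * θ - t) / 2)| ≤ |((p:ℝ) * θ - t) / 2| :=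
      Real.abs_sin_le_abs
    have habs2 : |((p:ℝ) * θ - t) / 2| = ((p:ℝ) * θ - t) / 2 :=
      _root_.abs_of_nonneg (by linarith)
    have hπ4 : π ≤ 4 := by linarith [Real.pi_lt_d2]
    refine le_of_lt ?_
    calc 2 * |Real.sin (((p:ℝ) * θ - t) / 2)| ≤ 2 * |((p:ℝ) * θ - t) / 2| := by
          linarith [hsin]
      _ = (p:ℝ) * θ - t := by rw [habs2]; ring
      _ < θ := by linarith
      _ < π / 2 * ε := hθε
      _ ≤ 2 * ε := by nlinarith

theorem stmt_0 :
    ∃ C C' : ℝ, 1 ≤ C ∧ 1 ≤ C' ∧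
      ∀ γ ε : ℝ, 0 < γ → 0 < ε →
        ∀ μ : ℂ, ‖μ‖ = 1 →
          γ < ‖μ - 1‖ → ‖μ - 1‖ < ε →
            ∀ ν : ℂ, ‖ν‖ = 1 →
              ∃ p : ℕ, 1 ≤ p ∧ (p : ℤ) ≤ ⌊C' / γ⌋ ∧
                ‖μ ^ p - ν‖ ≤ C * ε := by
  refine ⟨2, 10, by norm_num, by norm_num, ?_⟩
  intro γ ε hγ hε μ hμ h1 h2 ν hν
  have hargne : μ.arg ≠ 0 := by
    intro h
    have hμ1 : μ = 1 := by
      have h' := Complex.norm_mul_exp_arg_mul_I μ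
      rw [hμ, h] at h'
      simpa using h'.symm
    rw [hμ1] at h1
    simp at h1
    linarith
  rcases lt_or_gt_of_ne hargne with hneg | hpos
  · have hμc : ‖starRingEnd ℂ μ‖ = 1 := by
      rw [Complex.norm_conj]; exact hμ
    have hargc : 0 < (starRingEnd ℂ μ).arg := by
      rw [Complex.arg_conj]
      split_ifs with h
      · exact Real.pi_pos
      · linarith
    have hsub : ‖starRingEnd ℂ μ - 1‖ = ‖μ - 1‖ := by
      rw [show (starRingEnd ℂ μ - 1) = starRingEnd ℂ (μ - 1) by simp [map_sub]]
      exact Complex.norm_conj _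
    have hνc : ‖starRingEnd ℂ ν‖ = 1 := by
      rw [Complex.norm_conj]; exact hν
    obtain ⟨p, hp1, hp2, hp3⟩ :=
      key_lemma hγ hε hμc hargc (by rw [hsub]; exact h1) (by rw [hsub]; exact h2) hνc
    refine ⟨p, hp1, Int.le_floor.mpr (by push_cast; exact hp2), ?_⟩
    have hcp : starRingEnd ℂ μ ^ p - starRingEnd ℂ ν = starRingEnd ℂ (μ ^ p - ν) := by
      simp [map_sub, map_pow]
    rwa [hcp, Complex.norm_conj] at hp3
  · obtain ⟨p, hp1, hp2, hp3⟩ := key_lemma hγ hε hμ hpos h1 h2 hν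
    exact ⟨p, hp1, Int.le_floor.mpr (by push_cast; exact hp2), hp3⟩
end

section
/- For any ε > 0 there exist positive integers Σ and Θ such that for every λ on the unit circle 𝕋, every pair of positive integers L, H, and every integer S, at least one of the following holds: either |λ^{HΣL} - 1| < ε, or there exists j ∈ {1, ..., Θ} such that |λ^{HLj + S} - 1| < ε. -/
open Real Complex

private lemma step_pos (θ β : ℝ) (hθ : 0 < θ) :
    ∃ (n : ℕ) (m : ℤ), 1 ≤ n ∧ (n : ℝ) ≤ 1/θ + 2 ∧ |n*θ + β - m| ≤ θ := by
  set m : ℤ := ⌈β + θ⌉ with hm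
  have hm1 : β + θ ≤ (m : ℝ) := Int.le_ceil _
  have hm2 : (m : ℝ) < β + θ + 1 := Int.ceil_lt_add_one _
  set r : ℝ := ((m : ℝ) - β)/θ with hr
  have hr0 : 0 < r := by
    apply div_pos _ hθ; linarith
  have hr1 : 1 ≤ r := by rw [le_div_iff₀ hθ]; linarith
  have hrub : r ≤ 1/θ + 1 := by
    rw [div_le_iff₀ hθ]
    have h1 : (1/θ) * θ = 1 := by field_simp
    nlinarith
  refine ⟨⌈r⌉₊, m, Nat.one_le_ceil_iff.2 hr0, ?_, ?_⟩
  · have := Nat.ceil_lt_add_one hr0.le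
    linarith
  · have h1 : r ≤ (⌈r⌉₊ : ℝ) := Nat.le_ceil r
    have h2 : (⌈r⌉₊ : ℝ) < r + 1 := Nat.ceil_lt_add_one hr0.le
    rw [abs_le]
    constructor
    · have : (m : ℝ) - β ≤ ⌈r⌉₊ * θ := by
        rw [hr, div_le_iff₀ hθ] at h1; linarith
      linarith
    · have hrθ : r * θ = (m : ℝ) - β := div_mul_cancel₀ _ hθ.ne'
      nlinarith [mul_lt_mul_of_pos_right h2 hθ]

private lemma step_gen (θ β : ℝ) (hθ : θ ≠ 0) :
    ∃ (n : ℕ) (m : ℤ), 1 ≤ n ∧ (n : ℝ) ≤ 1/|θ| + 2 ∧ |n*θ + β - m| ≤ |θ| := by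
  rcases hθ.lt_or_gt with h | h
  · obtain ⟨n, m, h1, h2, h3⟩ := step_pos (-θ) (-β) (by linarith)
    refine ⟨n, -m, h1, by rwa [abs_of_neg h], ?_⟩
    rw [abs_of_neg h]
    calc |n*θ + β - (-m : ℤ)| = |-(n*(-θ) + (-β) - m)| := by push_cast; ring_nf
      _ = |n*(-θ) + (-β) - m| := abs_neg _
      _ ≤ -θ := h3
  · obtain ⟨n, m, h1, h2, h3⟩ := step_pos θ β h
    exact ⟨n, m, h1, by rwa [abs_of_pos h], by rwa [abs_of_pos h]⟩

private lemma near_one (x : ℝ) (M : ℤ) (h : 2*Real.pi*|x - M| ≤ 1) :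
    ‖Complex.exp ((x : ℂ) * (2*Real.pi*Complex.I)) - 1‖ ≤ 4*Real.pi*|x - M| := by
  have key : Complex.exp ((x : ℂ) * (2*Real.pi*Complex.I))
      = Complex.exp (((x - M : ℝ) : ℂ) * (2*Real.pi*Complex.I)) := by
    rw [show ((x : ℂ) * (2*Real.pi*Complex.I))
        = ((x - M : ℝ) : ℂ) * (2*Real.pi*Complex.I) + (M : ℂ) * (2*Real.pi*Complex.I) by
      push_cast; ring]
    rw [Complex.exp_add, Complex.exp_int_mul_two_pi_mul_I, mul_one]
  rw [key]
  have habs : ‖((x - M : ℝ) : ℂ) * (2*Real.pi*Complex.I)‖ = 2*Real.pi*|x - M| := by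
    rw [norm_mul, Complex.norm_real, Real.norm_eq_abs]
    have h2pi : ‖2*(Real.pi:ℂ)*Complex.I‖ = 2*Real.pi := by
      simp [abs_of_pos Real.pi_pos]
    rw [h2pi]; ring
  calc ‖Complex.exp (((x - M : ℝ) : ℂ) * (2*Real.pi*Complex.I)) - 1‖
      ≤ 2 * ‖((x - M : ℝ) : ℂ) * (2*Real.pi*Complex.I)‖ :=
        Complex.norm_exp_sub_one_le (by rw [habs]; exact h)
    _ = 4*Real.pi*|x - M| := by rw [habs]; ring

theorem stmt_1 :
    ∀ ε : ℝ, 0 < ε →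
      ∃ Sg Θ : ℕ, 0 < Sg ∧ 0 < Θ ∧
        ∀ z : ℂ, ‖z‖ = 1 →
          ∀ L H : ℕ, 0 < L → 0 < H → ∀ S : ℤ,
            ‖z ^ (H * Sg * L) - 1‖ < ε ∨
            ∃ j : ℕ, 1 ≤ j ∧ j ≤ Θ ∧
              ‖z ^ ((H * L * j : ℤ) + S) - 1‖ < ε := by
  intro ε hε
  have hπ := Real.pi_pos
  rcases lt_or_ge 2 ε with hε2 | hε2
  · refine ⟨1, 1, one_pos, one_pos, fun z hz L H hL hH S => Or.inl ?_⟩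
    calc ‖z ^ (H*1*L) - 1‖ ≤ ‖z ^ (H*1*L)‖ + ‖(1:ℂ)‖ :=
          norm_sub_le _ _
      _ = 2 := by rw [norm_pow, hz, one_pow, norm_one]; norm_num
      _ < ε := hε2
  -- main case : ε ≤ 2
  set Q : ℕ := ⌈4*Real.pi/ε⌉₊ + 1 with hQdef
  have hQR : 4*Real.pi/ε < (Q:ℝ) := by
    have := Nat.le_ceil (4*Real.pi/ε)
    push_cast [hQdef]; linarith
  have hQpos : 0 < Q := Nat.succ_pos _
  have hQRpos : (0:ℝ) < Q := by exact_mod_cast hQpos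
  have hQε : 4*Real.pi/(Q:ℝ) < ε := by
    rw [div_lt_iff₀ hQRpos]
    calc 4*Real.pi = (4*Real.pi/ε) * ε := by field_simp
      _ < (Q:ℝ) * ε := by exact mul_lt_mul_of_pos_right hQR hε
      _ = ε * (Q:ℝ) := mul_comm _ _
  have hQ8 : (7:ℕ) ≤ Q := by
    have h6 : (6:ℝ) < 4*Real.pi/ε := by
      rw [lt_div_iff₀ hε]
      nlinarith [Real.pi_gt_three]
    have : (6:ℕ) < ⌈4*Real.pi/ε⌉₊ := Nat.lt_ceil.2 (by exact_mod_cast h6)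
    omega
  set Sg : ℕ := Q.factorial with hSgdef
  have hSgpos : 0 < Sg := Q.factorial_pos
  have hSgRpos : (0:ℝ) < Sg := by exact_mod_cast hSgpos
  set η : ℝ := ε/(8*Real.pi*Sg) with hηdef
  have hηpos : 0 < η := by positivity
  set Θ : ℕ := Q * (⌈1/η⌉₊ + 2) with hΘdef
  have hΘpos : 0 < Θ := by positivity
  refine ⟨Sg, Θ, hSgpos, hΘpos, ?_⟩
  intro z hz L H hL hH S
  have hz0 : z ≠ 0 := by
    intro h; rw [h, norm_zero] at hz; norm_num at hz
  set w : ℂ := z ^ (H*L) with hwdef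
  have hw : ‖w‖ = 1 := by rw [hwdef, norm_pow, hz, one_pow]
  set α : ℝ := w.arg / (2*Real.pi) with hαdef
  have h2πc : (2*(Real.pi:ℂ)) ≠ 0 := by
    simp [Real.pi_ne_zero]
  have hwexp : w = Complex.exp ((α:ℂ) * (2*Real.pi*Complex.I)) := by
    have h := Complex.norm_mul_exp_arg_mul_I w
    rw [hw, Complex.ofReal_one, one_mul] at h
    rw [← h]; congr 1
    rw [hαdef]; push_cast
    field_simp
  set c : ℂ := z ^ S with hcdef
  have hc : ‖c‖ = 1 := by rw [hcdef, norm_zpow, hz, one_zpow]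
  set β : ℝ := c.arg / (2*Real.pi) with hβdef
  have hcexp : c = Complex.exp ((β:ℂ) * (2*Real.pi*Complex.I)) := by
    have h := Complex.norm_mul_exp_arg_mul_I c
    rw [hc, Complex.ofReal_one, one_mul] at h
    rw [← h]; congr 1
    rw [hβdef]; push_cast
    field_simp
  obtain ⟨k, q, hq0, hqQ, hqk⟩ := Real.exists_int_int_abs_mul_sub_le α hQpos
  set qn : ℕ := q.toNat with hqndef
  have hqn : (qn : ℤ) = q := Int.toNat_of_nonneg hq0.le
  have hqn1 : 1 ≤ qn := by omega
  have hqnQ : qn ≤ Q := by omega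
  have hqr : ((qn:ℕ) : ℝ) = ((q:ℤ) : ℝ) := by exact_mod_cast congrArg (Int.cast : ℤ → ℝ) hqn
  by_cases hcase : |(q:ℝ)*α - (k:ℝ)| ≤ η
  · left
    obtain ⟨d, hd⟩ : qn ∣ Sg := Nat.dvd_factorial hqn1 hqnQ
    have hdSg : d ≤ Sg := by
      rw [hd]; exact Nat.le_mul_of_pos_left d (by omega)
    have hzw : z ^ (H*Sg*L) = w ^ Sg := by
      rw [hwdef, ← pow_mul]; congr 1; ring
    have hwexp2 : w ^ Sg = Complex.exp ((((Sg:ℝ)*α : ℝ) : ℂ) * (2*Real.pi*Complex.I)) := by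
      rw [hwexp, ← Complex.exp_nat_mul]; congr 1; push_cast; ring
    have hxM : |(Sg:ℝ)*α - ((d*k : ℤ):ℝ)| ≤ (Sg:ℝ) * η := by
      have heq : (Sg:ℝ)*α - ((d*k : ℤ):ℝ) = (d:ℝ) * ((q:ℝ)*α - (k:ℝ)) := by
        have hSgr : (Sg:ℝ) = (qn:ℝ) * (d:ℝ) := by exact_mod_cast congrArg (Nat.cast : ℕ → ℝ) hd
        rw [hSgr, hqr]; push_cast; ring
      rw [heq, abs_mul, _root_.abs_of_nonneg (by positivity : (0:ℝ) ≤ (d:ℝ))]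
      have hdr : (d:ℝ) ≤ (Sg:ℝ) := by exact_mod_cast hdSg
      exact mul_le_mul hdr hcase (abs_nonneg _) hSgRpos.le
    have hSgη : (Sg:ℝ) * η = ε/(8*Real.pi) := by
      rw [hηdef]; field_simp
    rw [hzw, hwexp2]
    have h1 : 2*Real.pi*|(Sg:ℝ)*α - ((d*k : ℤ):ℝ)| ≤ 2*Real.pi*((Sg:ℝ)*η) :=
      mul_le_mul_of_nonneg_left hxM (by positivity)
    have h1' : 2*Real.pi*((Sg:ℝ)*η) = ε/4 := by
      rw [hSgη]; field_simp; ring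
    have hb := near_one ((Sg:ℝ)*α) (d*k) (by rw [h1'] at h1; linarith)
    have h2 : 4*Real.pi*|(Sg:ℝ)*α - ((d*k : ℤ):ℝ)| ≤ 4*Real.pi*((Sg:ℝ)*η) :=
      mul_le_mul_of_nonneg_left hxM (by positivity)
    have h2' : 4*Real.pi*((Sg:ℝ)*η) = ε/2 := by
      rw [hSgη]; field_simp; ring
    linarith
  · right
    push_neg at hcase
    set θ0 : ℝ := (q:ℝ)*α - (k:ℝ) with hθ0def
    have hθ0η : η < |θ0| := hcase
    have hθ0ne : θ0 ≠ 0 := by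
      intro h; rw [h, abs_zero] at hθ0η; linarith
    have hθ0ub : |θ0| ≤ 1/((Q:ℝ)+1) := hqk
    obtain ⟨n, m, hn1, hnle, hstep⟩ := step_gen θ0 β hθ0ne
    refine ⟨n * qn, Nat.one_le_iff_ne_zero.2 (by positivity), ?_, ?_⟩
    · have hnb : n ≤ ⌈1/η⌉₊ + 2 := by
        have h1 : 1/|θ0| ≤ 1/η := one_div_le_one_div_of_le hηpos hθ0η.le
        have h2 : (n:ℝ) ≤ (⌈1/η⌉₊:ℝ) + 2 := le_trans hnle (by
          have := Nat.le_ceil (1/η); linarith)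
        exact_mod_cast h2
      calc n * qn ≤ (⌈1/η⌉₊ + 2) * Q := Nat.mul_le_mul hnb hqnQ
        _ = Θ := by rw [hΘdef, mul_comm]
    · have hcast : ((H*L*(n*qn):ℕ) : ℤ) = ((H:ℤ)*(L:ℤ)*((n*qn:ℕ):ℤ)) := by
        push_cast; ring
      have hre : z ^ (((H:ℤ)*(L:ℤ)*((n*qn:ℕ):ℤ)) + S) = w ^ (n*qn) * c := by
        rw [zpow_add₀ hz0, ← hcast, zpow_natCast, pow_mul, ← hwdef, ← hcdef]
      have hexp2 : w ^ (n*qn) * c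
          = Complex.exp (((((n*qn:ℕ):ℝ)*α + β : ℝ) : ℂ) * (2*Real.pi*Complex.I)) := by
        rw [hwexp, hcexp, ← Complex.exp_nat_mul, ← Complex.exp_add]
        congr 1; push_cast; ring
      have hxM : |((n*qn:ℕ):ℝ)*α + β - ((m + n*k : ℤ):ℝ)| ≤ 1/((Q:ℝ)+1) := by
        have heq : ((n*qn:ℕ):ℝ)*α + β - ((m + n*k : ℤ):ℝ) = (n:ℝ)*θ0 + β - (m:ℝ) := by
          rw [hθ0def]; push_cast [hqr]; ring
        rw [heq]
        exact le_trans hstep hθ0ub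
      have hQQ : 1/((Q:ℝ)+1) ≤ 1/(Q:ℝ) := by
        apply one_div_le_one_div_of_le hQRpos; linarith
      have hb := near_one (((n*qn:ℕ):ℝ)*α + β) (m + n*k) (by
        have h7 : (7:ℝ) ≤ (Q:ℝ) := by exact_mod_cast hQ8
        have h17 : 1/(Q:ℝ) ≤ 1/7 := by
          apply one_div_le_one_div_of_le (by norm_num); linarith
        have hx7 : |((n*qn:ℕ):ℝ)*α + β - ((m + n*k : ℤ):ℝ)| ≤ 1/7 :=
          le_trans hxM (le_trans hQQ h17)
        nlinarith [Real.pi_lt_d2,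
          abs_nonneg (((n*qn:ℕ):ℝ)*α + β - ((m + n*k : ℤ):ℝ))])
      rw [hre, hexp2]
      have h4 : 4*Real.pi*|((n*qn:ℕ):ℝ)*α + β - ((m + n*k : ℤ):ℝ)| ≤ 4*Real.pi*(1/(Q:ℝ)) := by
        apply mul_le_mul_of_nonneg_left (le_trans hxM hQQ) (by positivity)
      have h5 : 4*Real.pi*(1/(Q:ℝ)) < ε := by
        rw [mul_one_div]; exact hQε
      linarith
end

section
/- There exists a positive constant M such that for any strictly increasing sequence of positive integers (m_k)_{k≥1} satisfying m_{k+1}/m_k > 2 for all k ≥ 1, the set of λ ∈ 𝕋 such that |λ^{m_k} - 1| ≤ M · m_k/m_{k+1} for all k ≥ 1 is uncountable. -/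
open Real Set

noncomputable def zmap (θ : ℝ) : ℂ := Complex.exp ((2 * Real.pi * θ : ℝ) * Complex.I)

lemma zmap_abs (θ : ℝ) : ‖zmap θ‖ = 1 := Complex.norm_exp_ofReal_mul_I _

lemma zmap_pow (θ : ℝ) (n : ℕ) : zmap θ ^ n = zmap (n * θ) := by
  unfold zmap
  rw [← Complex.exp_nat_mul]
  congr 1
  push_cast
  ring

lemma zmap_inj {θ θ' : ℝ} (h : |θ - θ'| < 1) (he : zmap θ = zmap θ') : θ = θ' := by
  unfold zmap at he
  rw [Complex.exp_eq_exp_iff_exists_int] at he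
  obtain ⟨n, hn⟩ := he
  have hI : ((2 * Real.pi * θ : ℝ) : ℂ) = ((2 * Real.pi * θ' + n * (2 * Real.pi) : ℝ) : ℂ) := by
    apply mul_right_cancel₀ Complex.I_ne_zero
    rw [hn]; push_cast; ring
  have h2 : 2 * Real.pi * θ = 2 * Real.pi * θ' + n * (2 * Real.pi) := by exact_mod_cast hI
  have hπ := Real.pi_pos
  have hθ : θ - θ' = n := by nlinarith
  rw [hθ] at h
  have hn0 : n = 0 := by
    have h1 : |(n : ℝ)| < 1 := h
    rw [← Int.cast_abs] at h1
    have h2 : |n| < 1 := by exact_mod_cast h1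
    have h3 := abs_lt.mp h2
    omega
  rw [hn0] at hθ
  push_cast at hθ
  linarith

lemma key_bound (θ : ℝ) (n : ℕ) (t : ℤ) (d : ℝ) (h1 : |n * θ - t| ≤ d)
    (h2 : 2 * Real.pi * d ≤ 1) :
    ‖zmap θ ^ n - 1‖ ≤ 4 * Real.pi * d := by
  rw [zmap_pow]
  have hz : zmap ((n : ℝ) * θ) = Complex.exp (((2 * Real.pi * ((n : ℝ) * θ - t) : ℝ) : ℂ) * Complex.I) := by
    unfold zmap
    rw [show ((2 * Real.pi * ((n : ℝ) * θ) : ℝ) : ℂ) * Complex.I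
        = ((2 * Real.pi * ((n : ℝ) * θ - t) : ℝ) : ℂ) * Complex.I + (t : ℂ) * (2 * Real.pi * Complex.I) by
      push_cast; ring]
    rw [Complex.exp_add, Complex.exp_int_mul_two_pi_mul_I, mul_one]
  rw [hz]
  have hπ := Real.pi_pos
  have habs : ‖((2 * Real.pi * ((n : ℝ) * θ - t) : ℝ) : ℂ) * Complex.I‖
      = 2 * Real.pi * |(n : ℝ) * θ - t| := by
    rw [norm_mul, Complex.norm_I, mul_one, Complex.norm_real, Real.norm_eq_abs, abs_mul,
      abs_of_pos (show (0:ℝ) < 2 * Real.pi by positivity)]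
  have hle : ‖((2 * Real.pi * ((n : ℝ) * θ - t) : ℝ) : ℂ) * Complex.I‖ ≤ 1 := by
    rw [habs]
    nlinarith
  calc ‖Complex.exp (((2 * Real.pi * ((n : ℝ) * θ - t) : ℝ) : ℂ) * Complex.I) - 1‖
      ≤ 2 * ‖((2 * Real.pi * ((n : ℝ) * θ - t) : ℝ) : ℂ) * Complex.I‖ :=
        Complex.norm_exp_sub_one_le hle
    _ = 2 * (2 * Real.pi * |(n : ℝ) * θ - t|) := by rw [habs]
    _ ≤ 4 * Real.pi * d := by nlinarith

lemma uncountable_bool_seq : ¬ Countable (ℕ → Bool) := by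
  classical
  intro hc
  obtain ⟨f, hf⟩ := exists_injective_nat (ℕ → Bool)
  have hinj : Function.Injective (fun s : Set ℕ => f (fun n => if n ∈ s then true else false)) := by
    intro s t hst
    have h1 := hf hst
    ext n
    have h2 := congrFun h1 n
    by_cases hns : n ∈ s <;> by_cases hnt : n ∈ t <;> simp [hns, hnt] at h2 ⊢
  exact Function.cantor_injective _ hinj

section construction

variable (m e : ℕ → ℕ)

def aSeq (ε : ℕ → Bool) : ℕ → ℕ
  | 0 => 0
  | i + 1 => (aSeq ε i * m (e (i + 1)) + m (e i) - 1) / m (e i) + (if ε i then 1 else 0)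

noncomputable def cSeq (ε : ℕ → Bool) (i : ℕ) : ℝ := (aSeq m e ε i : ℝ) / (m (e i) : ℝ)

noncomputable def RSeq (i : ℕ) : ℝ := 3 / (m (e i + 1) : ℝ)

noncomputable def θmap (ε : ℕ → Bool) : ℝ := ⨆ i, cSeq m e ε i

variable
  (hpos : ∀ k, 1 ≤ k → 0 < m k)
  (hmono : ∀ j k, 1 ≤ j → j ≤ k → m j ≤ m k)
  (he1 : ∀ i, 1 ≤ e i)
  (heA : ∀ i, 19 * m (e i) < m (e i + 1))
  (heS : ∀ i, e i + 1 ≤ e (i + 1))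

lemma ceil_div_facts (n mm : ℕ) (h : 0 < mm) :
    n ≤ ((n + mm - 1) / mm) * mm ∧ ((n + mm - 1) / mm) * mm ≤ n + mm - 1 := by
  have h1 := Nat.div_add_mod (n + mm - 1) mm
  have h2 := Nat.mod_lt (n + mm - 1) h
  have h3 : ((n + mm - 1) / mm) * mm = mm * ((n + mm - 1) / mm) := Nat.mul_comm _ _
  omega

include hpos hmono he1 heA heS in
lemma step_facts (ε : ℕ → Bool) (i : ℕ) :
    cSeq m e ε i ≤ cSeq m e ε (i + 1) ∧
    cSeq m e ε (i + 1) + RSeq m e (i + 1) ≤ cSeq m e ε i + RSeq m e i := by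
  have hmm : (0 : ℝ) < m (e i) := by exact_mod_cast hpos _ (he1 i)
  have hm' : (0 : ℝ) < m (e (i + 1)) := by exact_mod_cast hpos _ (he1 (i + 1))
  have hm'' : (0 : ℝ) < m (e (i + 1) + 1) := by
    exact_mod_cast hpos _ (le_trans (he1 (i + 1)) (Nat.le_succ _))
  have hmi1 : (0 : ℝ) < m (e i + 1) := by
    exact_mod_cast hpos _ (le_trans (he1 i) (Nat.le_succ _))
  set A := aSeq m e ε i with hA
  set q := (A * m (e (i + 1)) + m (e i) - 1) / m (e i) with hq
  have hcf := ceil_div_facts (A * m (e (i + 1))) (m (e i)) (hpos _ (he1 i))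
  rw [← hq] at hcf
  have ha1 : aSeq m e ε (i + 1) = q + (if ε i then 1 else 0) := rfl
  have hbm : (if ε i then 1 else 0) * m (e i) ≤ m (e i) := by split <;> omega
  -- natural number bounds
  have hN1 : A * m (e (i + 1)) ≤ aSeq m e ε (i + 1) * m (e i) := by
    rw [ha1, Nat.add_mul]
    omega
  have hN2 : aSeq m e ε (i + 1) * m (e i) ≤ A * m (e (i + 1)) + 2 * m (e i) := by
    rw [ha1, Nat.add_mul]
    omega
  have hR1 : (A : ℝ) * m (e (i + 1)) ≤ (aSeq m e ε (i + 1) : ℝ) * m (e i) := by exact_mod_cast hN1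
  have hR2 : (aSeq m e ε (i + 1) : ℝ) * m (e i) ≤ (A : ℝ) * m (e (i + 1)) + 2 * m (e i) := by
    exact_mod_cast hN2
  have hstep1 : cSeq m e ε i ≤ cSeq m e ε (i + 1) := by
    unfold cSeq
    rw [div_le_div_iff₀ hmm hm']
    exact hR1
  have hstep2 : cSeq m e ε (i + 1) ≤ cSeq m e ε i + 2 / (m (e (i + 1)) : ℝ) := by
    unfold cSeq
    rw [show (A : ℝ) / m (e i) + 2 / m (e (i + 1))
        = ((A : ℝ) * m (e (i + 1)) + 2 * m (e i)) / (m (e i) * m (e (i + 1))) by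
      field_simp]
    rw [div_le_div_iff₀ hm' (by positivity)]
    nlinarith
  refine ⟨hstep1, ?_⟩
  -- R (i+1) ≤ 3 / (19 * m')
  have hr1 : RSeq m e (i + 1) ≤ 3 / (19 * (m (e (i + 1)) : ℝ)) := by
    unfold RSeq
    apply div_le_div_of_nonneg_left (by norm_num) (by positivity)
    exact_mod_cast (heA (i + 1)).le
  have hr2 : 3 / (m (e (i + 1)) : ℝ) ≤ RSeq m e i := by
    unfold RSeq
    apply div_le_div_of_nonneg_left (by norm_num) hmi1
    exact_mod_cast hmono _ _ (le_trans (he1 i) (Nat.le_succ _)) (heS i)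
  have hcomb : 2 / (m (e (i + 1)) : ℝ) + 3 / (19 * (m (e (i + 1)) : ℝ)) ≤ 3 / (m (e (i + 1)) : ℝ) := by
    have heq : 2 / (m (e (i + 1)) : ℝ) + 3 / (19 * (m (e (i + 1)) : ℝ))
        = 41 / (19 * (m (e (i + 1)) : ℝ)) := by
      field_simp
      ring
    rw [heq, div_le_div_iff₀ (by positivity) hm']
    nlinarith
  linarith

include hpos hmono he1 heA heS in
lemma cSeq_mono (ε : ℕ → Bool) : Monotone (cSeq m e ε) := by
  apply monotone_nat_of_le_succ
  intro i
  exact (step_facts m e hpos hmono he1 heA heS ε i).1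

include hpos hmono he1 heA heS in
lemma cR_anti (ε : ℕ → Bool) {i j : ℕ} (h : i ≤ j) :
    cSeq m e ε j + RSeq m e j ≤ cSeq m e ε i + RSeq m e i := by
  induction j, h using Nat.le_induction with
  | base => exact le_refl _
  | succ j hj ih => exact le_trans (step_facts m e hpos hmono he1 heA heS ε j).2 ih

include hpos he1 in
lemma RSeq_pos (i : ℕ) : 0 < RSeq m e i := by
  unfold RSeq
  have : (0 : ℝ) < m (e i + 1) := by
    exact_mod_cast hpos _ (le_trans (he1 i) (Nat.le_succ _))
  positivity

include hpos hmono he1 heA heS in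
lemma θ_bounds (ε : ℕ → Bool) (i : ℕ) :
    cSeq m e ε i ≤ θmap m e ε ∧ θmap m e ε ≤ cSeq m e ε i + RSeq m e i := by
  have hbdd : BddAbove (Set.range (cSeq m e ε)) := by
    refine ⟨cSeq m e ε 0 + RSeq m e 0, ?_⟩
    rintro x ⟨j, rfl⟩
    have h1 := cR_anti m e hpos hmono he1 heA heS ε (Nat.zero_le j)
    have h2 := RSeq_pos m e hpos he1 j
    linarith
  constructor
  · exact le_ciSup hbdd i
  · apply ciSup_le
    intro j
    rcases le_total j i with hji | hij
    · have := cSeq_mono m e hpos hmono he1 heA heS ε hji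
      have h2 := RSeq_pos m e hpos he1 i
      linarith
    · have h1 := cR_anti m e hpos hmono he1 heA heS ε hij
      have h2 := RSeq_pos m e hpos he1 j
      linarith

include hpos hmono he1 heA heS in
lemma θ_range (ε : ℕ → Bool) : 0 ≤ θmap m e ε ∧ θmap m e ε ≤ 3 / 20 := by
  have h := θ_bounds m e hpos hmono he1 heA heS ε 0
  have hc0 : cSeq m e ε 0 = 0 := by unfold cSeq aSeq; simp
  have hR0 : RSeq m e 0 ≤ 3 / 20 := by
    unfold RSeq
    have h20 : (20 : ℝ) ≤ m (e 0 + 1) := by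
      have h1 := heA 0
      have h2 := hpos _ (he1 0)
      exact_mod_cast by omega
    rw [div_le_div_iff₀ (by linarith) (by norm_num)]
    linarith
  constructor
  · rw [← hc0]; exact h.1
  · calc θmap m e ε ≤ cSeq m e ε 0 + RSeq m e 0 := h.2
      _ = RSeq m e 0 := by rw [hc0]; ring
      _ ≤ 3 / 20 := hR0

-- aSeq depends only on earlier bits
lemma aSeq_congr (ε ε' : ℕ → Bool) (i : ℕ) (h : ∀ j, j < i → ε j = ε' j) :
    aSeq m e ε i = aSeq m e ε' i := by
  induction i with
  | zero => rfl
  | succ i ih =>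
    have hi := ih (fun j hj => h j (Nat.lt_succ_of_lt hj))
    show (aSeq m e ε i * m (e (i + 1)) + m (e i) - 1) / m (e i) + (if ε i then 1 else 0) = _
    rw [hi, h i (Nat.lt_succ_self i)]
    rfl

include hpos hmono he1 heA heS in
lemma θ_lt (ε ε' : ℕ → Bool) (i : ℕ) (h : ∀ j, j < i → ε j = ε' j)
    (hi : ε i = false) (hi' : ε' i = true) : θmap m e ε < θmap m e ε' := by
  have hm' : (0 : ℝ) < m (e (i + 1)) := by exact_mod_cast hpos _ (he1 (i + 1))
  have hm'' : (0 : ℝ) < m (e (i + 1) + 1) := by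
    exact_mod_cast hpos _ (le_trans (he1 (i + 1)) (Nat.le_succ _))
  have haa : aSeq m e ε' (i + 1) = aSeq m e ε (i + 1) + 1 := by
    have hq := aSeq_congr m e ε ε' i h
    show (aSeq m e ε' i * m (e (i + 1)) + m (e i) - 1) / m (e i) + (if ε' i then 1 else 0)
        = (aSeq m e ε i * m (e (i + 1)) + m (e i) - 1) / m (e i) + (if ε i then 1 else 0) + 1
    rw [hq, hi, hi']
    simp
  have hcc : cSeq m e ε' (i + 1) = cSeq m e ε (i + 1) + 1 / (m (e (i + 1)) : ℝ) := by
    unfold cSeq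
    rw [haa]
    push_cast
    field_simp
  have hRlt : RSeq m e (i + 1) < 1 / (m (e (i + 1)) : ℝ) := by
    unfold RSeq
    rw [div_lt_div_iff₀ hm'' hm']
    have h19 : 19 * m (e (i + 1)) < m (e (i + 1) + 1) := heA (i + 1)
    have : (19 : ℝ) * m (e (i + 1)) < m (e (i + 1) + 1) := by exact_mod_cast h19
    nlinarith
  have hub := (θ_bounds m e hpos hmono he1 heA heS ε (i + 1)).2
  have hlb := (θ_bounds m e hpos hmono he1 heA heS ε' (i + 1)).1
  calc θmap m e ε ≤ cSeq m e ε (i + 1) + RSeq m e (i + 1) := hub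
    _ < cSeq m e ε (i + 1) + 1 / (m (e (i + 1)) : ℝ) := by linarith
    _ = cSeq m e ε' (i + 1) := hcc.symm
    _ ≤ θmap m e ε' := hlb

include hpos hmono he1 heA heS in
lemma θ_injective : Function.Injective (θmap m e) := by
  intro ε ε' hee
  by_contra hne
  have hex : ∃ i, ε i ≠ ε' i := by
    by_contra hno
    push_neg at hno
    exact hne (funext hno)
  classical
  let i := Nat.find hex
  have hi : ε i ≠ ε' i := Nat.find_spec hex
  have hlt : ∀ j, j < i → ε j = ε' j := fun j hj => by
    have := Nat.find_min hex hj
    simpa using this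
  rcases Bool.eq_false_or_eq_true (ε i) with ht | hf
  · have hf' : ε' i = false := by
      cases hεi' : ε' i
      · rfl
      · exact absurd (ht.trans hεi'.symm) hi
    have := θ_lt m e hpos hmono he1 heA heS ε' ε i (fun j hj => (hlt j hj).symm) hf' ht
    exact absurd hee.symm (ne_of_lt this)
  · have ht' : ε' i = true := by
      cases hεi' : ε' i
      · exact absurd (hf.trans hεi'.symm) hi
      · rfl
    exact absurd hee (ne_of_lt (θ_lt m e hpos hmono he1 heA heS ε ε' i hlt hf ht'))

end construction

lemma trivial_bound (z : ℂ) (hz : ‖z‖ = 1) (n n' : ℕ) (h : n' ≤ 19 * n)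
    (hn' : 0 < n') : ‖z ^ n - 1‖ ≤ 38 * n / n' := by
  have h1 : ‖z ^ n - 1‖ ≤ 2 := by
    have h := norm_sub_le (z ^ n) 1
    have hzn : ‖z‖ = 1 := hz
    rw [norm_pow, hzn, one_pow, norm_one] at h
    have h' : ‖z ^ n - 1‖ ≤ 1 + 1 := h
    linarith
  have hn'R : (0 : ℝ) < n' := by exact_mod_cast hn'
  have h2 : (2 : ℝ) ≤ 38 * n / n' := by
    rw [le_div_iff₀ hn'R]
    have : (n' : ℝ) ≤ 19 * n := by exact_mod_cast h
    linarith
  linarith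

lemma active_bound (θ : ℝ) (n n' : ℕ) (t : ℤ) (hn' : 0 < n') (h19 : 19 * n < n')
    (h1 : |(n : ℝ) * θ - t| ≤ 3 * n / n') :
    ‖zmap θ ^ n - 1‖ ≤ 38 * n / n' := by
  have hπ := Real.pi_pos
  have hπ' := Real.pi_lt_d2
  have hn'R : (0 : ℝ) < n' := by exact_mod_cast hn'
  have h19R : 19 * (n : ℝ) < n' := by exact_mod_cast h19
  have hnn : (0 : ℝ) ≤ n := Nat.cast_nonneg n
  have hd : (0 : ℝ) ≤ 3 * n / n' := by positivity
  have hd19 : 3 * (n : ℝ) / n' ≤ 3 / 19 := by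
    rw [div_le_div_iff₀ hn'R (by norm_num)]
    linarith
  have h2 : 2 * Real.pi * (3 * n / n') ≤ 1 := by nlinarith
  have := key_bound θ n t (3 * n / n') h1 h2
  calc ‖zmap θ ^ n - 1‖ ≤ 4 * Real.pi * (3 * n / n') := this
    _ ≤ 38 * n / n' := by
      rw [show (38 : ℝ) * n / n' = 38 * (n / n') by ring,
        show (4 : ℝ) * Real.pi * (3 * n / n') = 12 * Real.pi * (n / n') by ring]
      have : (0 : ℝ) ≤ (n : ℝ) / n' := by positivity
      nlinarith

theorem stmt_2 :
    ∃ M : ℝ, 0 < M ∧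
      ∀ m : ℕ → ℕ,
        (∀ k, 1 ≤ k → 0 < m k) →
        (∀ k, 1 ≤ k → 2 * m k < m (k + 1)) →
        ¬ Set.Countable
          {z : ℂ | ‖z‖ = 1 ∧
            ∀ k, 1 ≤ k →
              ‖z ^ m k - 1‖ ≤ M * (m k : ℝ) / (m (k + 1) : ℝ)} := by
  classical
  refine ⟨38, by norm_num, ?_⟩
  intro m hpos hgrow hcount
  have hmono : ∀ j k, 1 ≤ j → j ≤ k → m j ≤ m k := by
    intro j k hj hjk
    induction k, hjk using Nat.le_induction with
    | base => exact le_refl _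
    | succ k hk ih =>
      have := hgrow k (le_trans hj hk)
      omega
  set p : ℕ → Prop := fun k => 1 ≤ k ∧ 19 * m k < m (k + 1) with hp
  by_cases hK : (setOf p).Infinite
  · -- infinitely many very fast growth steps : Cantor-style construction
    set e : ℕ → ℕ := Nat.nth p with hedef
    have he1 : ∀ i, 1 ≤ e i := fun i => (Nat.nth_mem_of_infinite hK i).1
    have heA : ∀ i, 19 * m (e i) < m (e i + 1) := fun i => (Nat.nth_mem_of_infinite hK i).2
    have heS : ∀ i, e i + 1 ≤ e (i + 1) := fun i =>
      Nat.succ_le_of_lt ((Nat.nth_lt_nth hK).mpr (Nat.lt_succ_self i))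
    set F : (ℕ → Bool) → ℂ := fun ε => zmap (θmap m e ε) with hF
    have hFinj : Function.Injective F := by
      intro ε ε' hFe
      apply θ_injective m e hpos hmono he1 heA heS
      apply zmap_inj _ hFe
      have h1 := θ_range m e hpos hmono he1 heA heS ε
      have h2 := θ_range m e hpos hmono he1 heA heS ε'
      rw [abs_lt]
      constructor <;> linarith
    have hrange : Set.range F ⊆
        {z : ℂ | ‖z‖ = 1 ∧
          ∀ k, 1 ≤ k →
            ‖z ^ m k - 1‖ ≤ 38 * (m k : ℝ) / (m (k + 1) : ℝ)} := by
      rintro z ⟨ε, rfl⟩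
      refine ⟨zmap_abs _, ?_⟩
      intro k hk
      by_cases hact : 19 * m k < m (k + 1)
      · -- active level : k is in the range of the enumeration
        have hkmem : k ∈ setOf p := ⟨hk, hact⟩
        have : k ∈ Set.range (Nat.nth p) := by
          rw [Nat.range_nth_of_infinite hK]; exact hkmem
        obtain ⟨i, hi⟩ := this
        have hek : e i = k := hi
        have hb := θ_bounds m e hpos hmono he1 heA heS ε i
        have hmk : (0 : ℝ) < m k := by exact_mod_cast hpos k hk
        have hmk1 : 0 < m (k + 1) := hpos (k + 1) (le_trans hk (Nat.le_succ _))
        have hmk1R : (0 : ℝ) < m (k + 1) := by exact_mod_cast hmk1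
        have hc : (m k : ℝ) * cSeq m e ε i = (aSeq m e ε i : ℝ) := by
          unfold cSeq
          rw [hek]
          field_simp
        have hR : RSeq m e i = 3 / (m (k + 1) : ℝ) := by unfold RSeq; rw [hek]
        have h1 : |(m k : ℝ) * θmap m e ε - ((aSeq m e ε i : ℤ) : ℝ)|
            ≤ 3 * (m k) / (m (k + 1)) := by
          have hbl := hb.1
          have hbu := hb.2
          rw [hR] at hbu
          rw [abs_le]
          push_cast
          have hmul1 : (m k : ℝ) * cSeq m e ε i ≤ (m k : ℝ) * θmap m e ε :=
            mul_le_mul_of_nonneg_left hbl hmk.le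
          have hmul2 : (m k : ℝ) * θmap m e ε ≤ (m k : ℝ) * (cSeq m e ε i + 3 / (m (k+1) : ℝ)) :=
            mul_le_mul_of_nonneg_left hbu hmk.le
          rw [mul_add, hc] at hmul2
          rw [hc] at hmul1
          rw [show (m k : ℝ) * (3 / (m (k+1) : ℝ)) = 3 * m k / m (k+1) by ring] at hmul2
          have hdpos : (0 : ℝ) ≤ 3 * (m k : ℝ) / (m (k+1) : ℝ) := by positivity
          constructor
          · linarith
          · linarith
        exact active_bound _ _ _ _ hmk1 hact h1
      · push_neg at hact
        exact trivial_bound _ (zmap_abs _) _ _ hact (hpos _ (le_trans hk (Nat.le_succ _)))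
    have hc1 : (Set.range F).Countable := hcount.mono hrange
    have hc2 : (Set.univ : Set (ℕ → Bool)).Countable := by
      have := hc1.preimage hFinj
      rwa [Set.preimage_range] at this
    exact uncountable_bool_seq (Set.countable_univ_iff.mp hc2)
  · -- only finitely many very fast growth steps : a whole arc works
    have hfin : (setOf p).Finite := Set.not_infinite.mp hK
    obtain ⟨N, hN⟩ : ∃ N, ∀ k ∈ setOf p, k ≤ N := by
      rcases hfin.bddAbove with ⟨N, hN⟩
      exact ⟨N, fun k hk => hN hk⟩
    have hmN : (0 : ℝ) < m (N + 1) := by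
      exact_mod_cast hpos (N + 1) (Nat.le_add_left 1 N)
    set η : ℝ := min (3 / (m (N + 1) : ℝ)) (1 / 2) with hη
    have hηpos : 0 < η := by
      apply lt_min (by positivity) (by norm_num)
    have hsub : zmap '' (Set.Ioo 0 η) ⊆
        {z : ℂ | ‖z‖ = 1 ∧
          ∀ k, 1 ≤ k →
            ‖z ^ m k - 1‖ ≤ 38 * (m k : ℝ) / (m (k + 1) : ℝ)} := by
      rintro z ⟨θ, hθ, rfl⟩
      refine ⟨zmap_abs _, ?_⟩
      intro k hk
      by_cases hact : 19 * m k < m (k + 1)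
      · have hkN : k ≤ N := hN k ⟨hk, hact⟩
        have hmk : (0 : ℝ) < m k := by exact_mod_cast hpos k hk
        have hmk1 : 0 < m (k + 1) := hpos (k + 1) (le_trans hk (Nat.le_succ _))
        have hmk1R : (0 : ℝ) < m (k + 1) := by exact_mod_cast hmk1
        have hmle : (m (k + 1) : ℝ) ≤ (m (N + 1) : ℝ) := by
          exact_mod_cast hmono (k + 1) (N + 1) (le_trans hk (Nat.le_succ _))
            (Nat.succ_le_succ hkN)
        have h1 : |(m k : ℝ) * θ - ((0 : ℤ) : ℝ)| ≤ 3 * (m k) / (m (k + 1)) := by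
          push_cast
          rw [sub_zero, abs_of_nonneg (by nlinarith [hθ.1.le] : (0:ℝ) ≤ (m k : ℝ) * θ)]
          have hθη : θ ≤ 3 / (m (N + 1) : ℝ) := le_trans hθ.2.le (min_le_left _ _)
          have hθ3 : θ ≤ 3 / (m (k + 1) : ℝ) := by
            apply le_trans hθη
            apply div_le_div_of_nonneg_left (by norm_num) hmk1R hmle
          calc (m k : ℝ) * θ ≤ (m k : ℝ) * (3 / (m (k + 1) : ℝ)) := by nlinarith
            _ = 3 * m k / m (k + 1) := by ring
        exact active_bound _ _ _ _ hmk1 hact h1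
      · push_neg at hact
        exact trivial_bound _ (zmap_abs _) _ _ hact (hpos _ (le_trans hk (Nat.le_succ _)))
    have hinjOn : Set.InjOn zmap (Set.Ioo 0 η) := by
      intro θ hθ θ' hθ' heq
      apply zmap_inj _ heq
      have hη2 : η ≤ 1 / 2 := min_le_right _ _
      rw [abs_lt]
      constructor <;>
        [ (have := hθ.1; have := hθ'.2; linarith);
          (have := hθ.2; have := hθ'.1; linarith) ]
    have hIc : (Set.Ioo (0 : ℝ) η).Countable :=
      Set.countable_of_injective_of_countable_image hinjOn (hcount.mono hsub)
    have := hIc.le_aleph0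
    rw [Cardinal.mk_Ioo_real hηpos] at this
    exact absurd this (by simp [Cardinal.aleph0_lt_continuum.not_ge])
end

section
/- There exists a positive constant M such that for any sequence of positive integers (m_k)_{k≥1} with m_{k+1}/m_k > 2 for all k ≥ 1, the set of λ ∈ 𝕋 satisfying |λ^{m_k} - 1| ≤ M · m_k/m_{k+1} for all k ≥ 1 is (6π/m₁)-dense in 𝕋; in particular there exists such a λ with |λ + 1| ≤ 6π/m₁. -/
open Complex Real Filter Topology

set_option maxHeartbeats 1000000

private lemma expI_sub_one_le (x : ℝ) :
    ‖Complex.exp (x * Complex.I) - 1‖ ≤ |x| := by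
  have h1 : ‖Complex.exp (x * Complex.I) - 1‖ ^ 2 = 2 - 2 * Real.cos x := by
    rw [Complex.sq_norm, Complex.normSq_apply]
    simp [Complex.exp_ofReal_mul_I_re, Complex.exp_ofReal_mul_I_im]
    nlinarith [Real.sin_sq_add_cos_sq x]
  have h2 : 2 - 2 * Real.cos x ≤ x ^ 2 := by
    nlinarith [Real.one_sub_sq_div_two_le_cos (x := x)]
  nlinarith [norm_nonneg (Complex.exp (x * Complex.I) - 1), abs_nonneg x,
    _root_.sq_abs x]

private lemma expI_sub_expI_le (a b : ℝ) :
    ‖Complex.exp (a * Complex.I) - Complex.exp (b * Complex.I)‖ ≤ |a - b| := by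
  have h : Complex.exp (a * Complex.I) - Complex.exp (b * Complex.I)
      = Complex.exp (b * Complex.I) * (Complex.exp ((a - b : ℝ) * Complex.I) - 1) := by
    rw [mul_sub, mul_one, ← Complex.exp_add]
    push_cast; ring_nf
  rw [h, norm_mul, Complex.norm_exp_ofReal_mul_I, one_mul]
  exact expI_sub_one_le _

private noncomputable def approxSeq (m : ℕ → ℕ) (t : ℝ) : ℕ → ℝ
  | 0 => t
  | (k + 1) => round ((m (k + 1) : ℝ) * approxSeq m t k / (2 * Real.pi)) *
      (2 * Real.pi) / (m (k + 1))

theorem stmt_3 :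
    ∃ M : ℝ, 0 < M ∧
      ∀ m : ℕ → ℕ,
        (∀ k, 1 ≤ k → 0 < m k) →
        (∀ k, 1 ≤ k → 2 * m k < m (k + 1)) →
        (∀ w : ℂ, ‖w‖ = 1 →
          ∃ z : ℂ, ‖z‖ = 1 ∧
            (∀ k, 1 ≤ k →
              ‖z ^ m k - 1‖ ≤ M * (m k : ℝ) / (m (k + 1) : ℝ)) ∧
            ‖z - w‖ ≤ 6 * Real.pi / (m 1 : ℝ)) ∧
        (∃ z : ℂ, ‖z‖ = 1 ∧
          (∀ k, 1 ≤ k →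
            ‖z ^ m k - 1‖ ≤ M * (m k : ℝ) / (m (k + 1) : ℝ)) ∧
          ‖z + 1‖ ≤ 6 * Real.pi / (m 1 : ℝ)) := by
  refine ⟨2 * Real.pi, by positivity, ?_⟩
  intro m hpos hgrow
  have hpi : (0:ℝ) < Real.pi := Real.pi_pos
  have key : ∀ w : ℂ, ‖w‖ = 1 →
      ∃ z : ℂ, ‖z‖ = 1 ∧
        (∀ k, 1 ≤ k →
          ‖z ^ m k - 1‖ ≤ (2 * Real.pi) * (m k : ℝ) / (m (k + 1) : ℝ)) ∧
        ‖z - w‖ ≤ 6 * Real.pi / (m 1 : ℝ) := by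
    intro w hw
    set t := Complex.arg w with ht
    have hwt : w = Complex.exp (t * Complex.I) := by
      conv_lhs => rw [← Complex.norm_mul_exp_arg_mul_I w]
      rw [hw]; simp [ht]
    set f := approxSeq m t with hf
    have hposk : ∀ k : ℕ, (0:ℝ) < m (k + 1) := by
      intro k; exact_mod_cast hpos (k + 1) (Nat.le_add_left 1 k)
    have hfsucc : ∀ k : ℕ, f (k + 1)
        = round ((m (k + 1) : ℝ) * f k / (2 * Real.pi)) * (2 * Real.pi) / (m (k + 1)) :=
      fun k => rfl
    -- step bound
    have hstep : ∀ k : ℕ, |f (k + 1) - f k| ≤ Real.pi / m (k + 1) := by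
      intro k
      have hM : (0:ℝ) < m (k + 1) := hposk k
      set x := (m (k + 1) : ℝ) * f k / (2 * Real.pi) with hx
      have hxf : x * (2 * Real.pi) / (m (k + 1)) = f k := by
        rw [hx]; field_simp
      have h1 : f (k + 1) = (round x : ℝ) * (2 * Real.pi) / (m (k + 1)) := by
        rw [hfsucc k, hx]
      have heq : f (k + 1) - f k
          = ((round x : ℝ) - x) * (2 * Real.pi) / (m (k + 1)) := by
        rw [h1, ← hxf]; ring
      have habs : |(round x : ℝ) - x| ≤ 1 / 2 := by
        rw [abs_sub_comm]; exact abs_sub_round x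
      rw [heq, abs_div, abs_mul, abs_of_pos hM,
        abs_of_pos (by positivity : (0:ℝ) < 2 * Real.pi),
        div_le_div_iff₀ (by positivity) hM]
      have hmm := mul_le_mul_of_nonneg_right
        (mul_le_mul_of_nonneg_right habs (by positivity : (0:ℝ) ≤ 2 * Real.pi)) hM.le
      linarith
    -- f (k+1) multiplied by m (k+1) is a multiple of 2π
    have hmult : ∀ k : ℕ,
        Complex.exp ((((m (k + 1) : ℝ) * f (k + 1) : ℝ) : ℂ) * Complex.I) = 1 := by
      intro k
      have hM : ((m (k + 1) : ℝ)) ≠ 0 := ne_of_gt (hposk k)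
      have hre : (m (k + 1) : ℝ) * f (k + 1)
          = (round ((m (k + 1) : ℝ) * f k / (2 * Real.pi)) : ℝ) * (2 * Real.pi) := by
        rw [hfsucc k]; field_simp
      rw [hre]
      have h2 := Complex.exp_int_mul_two_pi_mul_I
        (round ((m (k + 1) : ℝ) * f k / (2 * Real.pi)))
      rw [← h2]
      congr 1
      push_cast; ring
    -- growth
    have hgrowth : ∀ k j : ℕ, (2:ℝ) ^ j * m (k + 1) ≤ m (k + 1 + j) := by
      intro k j
      induction j with
      | zero => simp
      | succ j ih =>
        have h2 : 2 * m (k + 1 + j) < m (k + 1 + j + 1) := hgrow _ (by omega)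
        have h2' : (2:ℝ) * m (k + 1 + j) ≤ m (k + 1 + (j + 1)) := by
          have he : k + 1 + j + 1 = k + 1 + (j + 1) := by omega
          rw [← he]; exact_mod_cast h2.le
        calc (2:ℝ) ^ (j + 1) * m (k + 1) = 2 * ((2:ℝ) ^ j * m (k + 1)) := by ring
          _ ≤ 2 * m (k + 1 + j) := by linarith
          _ ≤ m (k + 1 + (j + 1)) := h2'
    -- geometric step bound
    have hgeo : ∀ k j : ℕ,
        dist (f (k + j)) (f (k + j + 1)) ≤ (Real.pi / m (k + 1)) * (1 / 2 : ℝ) ^ j := by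
      intro k j
      have h1 : dist (f (k + j)) (f (k + j + 1)) ≤ Real.pi / m (k + j + 1) := by
        rw [Real.dist_eq, abs_sub_comm]; exact hstep (k + j)
      have h2 : (2:ℝ) ^ j * m (k + 1) ≤ m (k + 1 + j) := hgrowth k j
      have hrhs : (Real.pi / m (k + 1)) * (1 / 2 : ℝ) ^ j
          = Real.pi / ((m (k + 1) : ℝ) * 2 ^ j) := by
        rw [div_pow, one_pow, div_mul_div_comm, mul_one]
      have h3 : Real.pi / m (k + j + 1) ≤ Real.pi / ((m (k + 1) : ℝ) * 2 ^ j) := by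
        apply div_le_div_of_nonneg_left hpi.le
        · exact mul_pos (hposk k) (by positivity)
        · have he : k + 1 + j = k + j + 1 := by omega
          rw [← he]; linarith [h2]
      rw [hrhs]; linarith
    have hr : (1/2 : ℝ) < 1 := by norm_num
    -- Cauchy and limit
    have hcauchy : CauchySeq f := by
      apply cauchySeq_of_le_geometric (1/2 : ℝ) (Real.pi / m 1) hr
      intro n
      simpa using hgeo 0 n
    obtain ⟨θ, hθ⟩ := cauchySeq_tendsto_of_complete hcauchy
    have hdist : ∀ k : ℕ, |f k - θ| ≤ 2 * Real.pi / m (k + 1) := by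
      intro k
      have htend : Tendsto (fun j => f (k + j)) atTop (𝓝 θ) := by
        have h := hθ.comp (tendsto_add_atTop_nat k)
        simpa [Function.comp_def, Nat.add_comm] using h
      have h := dist_le_of_le_geometric_of_tendsto₀ (1/2 : ℝ) (Real.pi / m (k + 1)) hr
        (hgeo k) htend
      simp only [Nat.add_zero] at h
      rw [Real.dist_eq] at h
      calc |f k - θ| ≤ (Real.pi / m (k + 1)) / (1 - 1/2) := h
        _ = 2 * Real.pi / m (k + 1) := by ring
    refine ⟨Complex.exp ((θ : ℂ) * Complex.I), Complex.norm_exp_ofReal_mul_I θ, ?_, ?_⟩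
    · intro K hK
      obtain ⟨j, hKj⟩ := Nat.exists_eq_add_of_le hK
      have hKj' : K = j + 1 := by omega
      have hzpow : Complex.exp ((θ : ℂ) * Complex.I) ^ m K
          = Complex.exp ((((m K : ℝ) * θ : ℝ) : ℂ) * Complex.I) := by
        rw [← Complex.exp_nat_mul]
        congr 1
        push_cast; ring
      have hone : Complex.exp ((((m K : ℝ) * f K : ℝ) : ℂ) * Complex.I) = 1 := by
        rw [hKj']; exact hmult j
      calc ‖Complex.exp ((θ : ℂ) * Complex.I) ^ m K - 1‖
          = ‖Complex.exp ((((m K : ℝ) * θ : ℝ) : ℂ) * Complex.I)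
              - Complex.exp ((((m K : ℝ) * f K : ℝ) : ℂ) * Complex.I)‖ := by
            rw [hzpow, hone]
        _ ≤ |(m K : ℝ) * θ - (m K : ℝ) * f K| := expI_sub_expI_le _ _
        _ = (m K : ℝ) * |f K - θ| := by
            rw [← mul_sub, abs_mul, Nat.abs_cast, abs_sub_comm]
        _ ≤ (m K : ℝ) * (2 * Real.pi / m (K + 1)) := by
            apply mul_le_mul_of_nonneg_left _ (Nat.cast_nonneg _)
            exact hdist K
        _ = 2 * Real.pi * (m K : ℝ) / (m (K + 1) : ℝ) := by ring
    · rw [hwt]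
      have hf0 : f 0 = t := rfl
      calc ‖Complex.exp ((θ : ℂ) * Complex.I) - Complex.exp ((t : ℂ) * Complex.I)‖
          ≤ |θ - t| := expI_sub_expI_le _ _
        _ = |f 0 - θ| := by rw [hf0, abs_sub_comm]
        _ ≤ 2 * Real.pi / m (0 + 1) := hdist 0
        _ ≤ 6 * Real.pi / m 1 := by
            have h01 : (0:ℝ) < m 1 := by simpa using hposk 0
            simp only [Nat.zero_add]
            rw [div_le_div_iff₀ h01 h01]
            nlinarith
  refine ⟨key, ?_⟩
  obtain ⟨z, h1, h2, h3⟩ := key (-1) (by simp)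
  exact ⟨z, h1, h2, by simpa [sub_neg_eq_add] using h3⟩
end

section
/- If (θ₁, ..., θ_{r+1}) are real numbers which are rationally independent together with 1, then for every δ ∈ (0,1) the set D = {n ≥ 0 : min_{1≤j≤r+1} {nθ_j - 1/2} < δ/(2π)} contains, for some q ≥ 1, the integers q, 2q, ..., (r+1)q; consequently D is a Poincaré set when applied with the tuple (θ₁, 2θ₂, ..., (r+1)θ_{r+1}). -/
open MeasureTheory Complex Finset Algebra Submodule Set

noncomputable section Stmt6Aux

namespace Stmt6

local instance fact01 : Fact ((0:ℝ) < 1) := ⟨one_pos⟩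

variable {d : ℕ}

/-- Multi-dimensional character on the torus. -/
def chi (d : ℕ) (a : Fin d → ℤ) : C((Fin d → AddCircle (1:ℝ)), ℂ) :=
  ⟨fun x => ∏ j, fourier (a j) (x j),
   continuous_finset_prod _ fun j _ =>
     (fourier (a j)).continuous.comp (continuous_apply j)⟩

lemma chi_apply (a : Fin d → ℤ) (x : Fin d → AddCircle (1:ℝ)) :
    chi d a x = ∏ j, fourier (a j) (x j) := rfl

lemma chi_zero : chi d 0 = 1 := by
  ext x
  simp [chi_apply, fourier_zero]

lemma chi_add (a b : Fin d → ℤ) : chi d (a + b) = chi d a * chi d b := by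
  ext x
  simp only [chi_apply, ContinuousMap.mul_apply, ← Finset.prod_mul_distrib]
  refine Finset.prod_congr rfl fun j _ => ?_
  simpa using (fourier_add (m := a j) (n := b j) (x := x j))

lemma chi_star (a : Fin d → ℤ) : chi d (-a) = star (chi d a) := by
  ext x
  simp only [chi_apply, ContinuousMap.star_apply, Pi.neg_apply, star_prod]
  exact Finset.prod_congr rfl fun j _ => by rw [fourier_neg]; rfl

/-- The star subalgebra generated by the characters. -/
def chiAlg (d : ℕ) : StarSubalgebra ℂ C((Fin d → AddCircle (1:ℝ)), ℂ) where
  toSubalgebra := Algebra.adjoin ℂ (range (chi d))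
  star_mem' := by
    show Algebra.adjoin ℂ (range (chi d)) ≤ star (Algebra.adjoin ℂ (range (chi d)))
    refine adjoin_le ?_
    rintro - ⟨a, rfl⟩
    exact subset_adjoin ⟨-a, chi_star a⟩

lemma chiAlg_coe (d : ℕ) :
    Subalgebra.toSubmodule (chiAlg d).toSubalgebra = span ℂ (range (chi d)) := by
  apply adjoin_eq_span_of_subset
  refine Subset.trans ?_ Submodule.subset_span
  intro x hx
  refine Submonoid.closure_induction (fun _ => id) ⟨0, ?_⟩ ?_ hx
  · exact chi_zero
  · rintro - - - - ⟨a, rfl⟩ ⟨b, rfl⟩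
    exact ⟨a + b, chi_add a b⟩

lemma chiAlg_separatesPoints (d : ℕ) : (chiAlg d).SeparatesPoints := by
  intro x y hxy
  obtain ⟨j, hj⟩ := Function.ne_iff.mp hxy
  refine ⟨_, ⟨chi d (Pi.single j 1), subset_adjoin ⟨Pi.single j 1, rfl⟩, rfl⟩, ?_⟩
  have key : ∀ v : Fin d → AddCircle (1:ℝ), chi d (Pi.single j 1) v = (AddCircle.toCircle (v j) : ℂ) := by
    intro v
    rw [chi_apply, Finset.prod_eq_single j]
    · rw [Pi.single_eq_same, fourier_one]
    · intro k _ hk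
      rw [Pi.single_eq_of_ne hk, fourier_zero]
    · simp
  dsimp only
  rw [key, key]
  intro h
  replace h := Circle.ext h
  exact hj (AddCircle.injective_toCircle one_ne_zero h)

lemma chiAlg_closure_eq_top (d : ℕ) : (chiAlg d).topologicalClosure = ⊤ :=
  ContinuousMap.starSubalgebra_topologicalClosure_eq_top_of_separatesPoints (chiAlg d)
    (chiAlg_separatesPoints d)

lemma integral_fourier_eq_zero {n : ℤ} (hn : n ≠ 0) :
    ∫ x : AddCircle (1:ℝ), fourier n x = 0 := by
  have key : ∀ x : AddCircle (1:ℝ),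
      fourier n (x + ((1/(2*(n:ℝ)) : ℝ) : AddCircle (1:ℝ))) = - fourier n x := by
    intro x
    have := fourier_add_half_inv_index hn one_pos x
    convert this using 3
    ring
  have h1 : ∫ x : AddCircle (1:ℝ), fourier n (x + ((1/(2*(n:ℝ)) : ℝ) : AddCircle (1:ℝ)))
      = ∫ x : AddCircle (1:ℝ), fourier n x := integral_add_right_eq_self _ _
  rw [funext key] at h1
  simp only [integral_neg] at h1
  linear_combination (-h1)/2

lemma integrable_of_continuous {X E : Type*} [MeasurableSpace X] [TopologicalSpace X]
    [CompactSpace X] [OpensMeasurableSpace X] [T2Space X] {μ : Measure X} [IsFiniteMeasure μ]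
    [NormedAddCommGroup E] {f : X → E} (hf : Continuous f) : Integrable f μ :=
  hf.integrable_of_hasCompactSupport
    (IsCompact.of_isClosed_subset isCompact_univ (isClosed_tsupport _) (Set.subset_univ _))

lemma integral_chi (a : Fin d → ℤ) :
    ∫ x : Fin d → AddCircle (1:ℝ), chi d a x = if a = 0 then 1 else 0 := by
  haveI : IsProbabilityMeasure (volume : Measure (AddCircle (1:ℝ))) :=
    ⟨by rw [AddCircle.measure_univ]; norm_num⟩
  have h : ∫ x : Fin d → AddCircle (1:ℝ), chi d a x
      = ∏ j, ∫ t : AddCircle (1:ℝ), fourier (a j) t := by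
    have := MeasureTheory.integral_fintype_prod_eq_prod (𝕜 := ℂ) (μ := fun _ => (volume : Measure (AddCircle (1:ℝ))))
        (f := fun j (t : AddCircle (1:ℝ)) => fourier (a j) t)
    exact this
  rw [h]
  by_cases ha : a = 0
  · subst ha
    simp [fourier_zero]
  · obtain ⟨j, hj⟩ := Function.ne_iff.mp ha
    rw [if_neg ha]
    exact Finset.prod_eq_zero (Finset.mem_univ j) (integral_fourier_eq_zero hj)

/-- The complex absolute value, as a bundled absolute value given by the norm. -/
def Complex.abs : AbsoluteValue ℂ ℝ := IsAbsoluteValue.toAbsoluteValue (norm : ℂ → ℝ)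

lemma Complex.abs_apply' (z : ℂ) : Complex.abs z = ‖z‖ := rfl

lemma Complex.abs_natCast (n : ℕ) : Complex.abs (n : ℂ) = n := by
  rw [Complex.abs_apply']; simp

lemma geom_bound {w : ℂ} (hw : Complex.abs w = 1) (h1 : w ≠ 1) (N : ℕ) :
    Complex.abs (∑ n ∈ Finset.range N, w^(n+1)) ≤ 2 / Complex.abs (w - 1) := by
  have hw0 : w - 1 ≠ 0 := sub_ne_zero.mpr h1
  have habs : 0 < Complex.abs (w - 1) := AbsoluteValue.pos _ hw0
  have h : ∑ n ∈ Finset.range N, w^(n+1) = w * ((w^N - 1)/(w - 1)) := by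
    rw [← geom_sum_eq h1 N, Finset.mul_sum]
    exact Finset.sum_congr rfl fun n _ => by ring
  rw [h, map_mul, hw, one_mul, map_div₀]
  have h2 : Complex.abs (w^N - 1) ≤ 2 := by
    calc Complex.abs (w^N - 1) ≤ Complex.abs (w^N) + Complex.abs 1 := by
          exact norm_sub_le (w^N) 1
    _ ≤ 2 := by rw [map_pow, hw]; norm_num
  gcongr

lemma chi_eval (a : Fin d → ℤ) (θ : Fin d → ℝ) (n : ℕ) :
    chi d a (fun j => (((n:ℝ) * θ j : ℝ) : AddCircle (1:ℝ)))
      = Complex.exp (((2 * Real.pi * ∑ j, (a j : ℝ) * θ j : ℝ) : ℂ) * I) ^ n := by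
  rw [chi_apply]
  have key : ∀ j : Fin d, (fourier (a j) ((((n:ℝ) * θ j : ℝ) : AddCircle (1:ℝ))) : ℂ)
      = Complex.exp (2 * Real.pi * I * (a j) * ((n:ℝ) * θ j)) := by
    intro j
    rw [fourier_coe_apply]
    norm_num
  rw [Finset.prod_congr rfl fun j _ => key j, ← Complex.exp_sum, ← Complex.exp_nat_mul]
  congr 1
  push_cast [Finset.mul_sum, Finset.sum_mul]
  exact Finset.sum_congr rfl fun j _ => by ring

set_option maxHeartbeats 1000000 in
theorem kronecker (d : ℕ) (θ c : Fin d → ℝ)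
    (hindep : ∀ (a : Fin d → ℤ) (m : ℤ), (∑ j, (a j : ℝ) * θ j) = (m:ℝ) → ∀ j, a j = 0)
    {ε : ℝ} (hε : 0 < ε) :
    ∃ n : ℕ, 1 ≤ n ∧ ∀ j, ‖(((n:ℝ) * θ j - c j : ℝ) : AddCircle (1:ℝ))‖ < ε := by
  by_contra hcon
  push_neg at hcon
  haveI : IsProbabilityMeasure (volume : Measure (AddCircle (1:ℝ))) :=
    ⟨by rw [AddCircle.measure_univ]; norm_num⟩
  haveI : IsProbabilityMeasure (volume : Measure (Fin d → AddCircle (1:ℝ))) :=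
    inferInstanceAs (IsProbabilityMeasure (Measure.pi fun _ => volume))
  set z : Fin d → AddCircle (1:ℝ) := fun j => ((c j : ℝ) : AddCircle (1:ℝ)) with hz
  set ρ : ℝ := min (ε/2) (1/2) with hρdef
  have hρ0 : 0 < ρ := lt_min (by linarith) (by norm_num)
  have hρε : ρ ≤ ε/2 := min_le_left _ _
  have hρhalf : ρ ≤ 1/2 := min_le_right _ _
  have bcont : ∀ j : Fin d, Continuous (fun t : AddCircle (1:ℝ) => max (ε - dist t (z j)) 0) :=
    fun j => (continuous_const.sub (continuous_id.dist continuous_const)).max continuous_const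
  set b : Fin d → (AddCircle (1:ℝ) → ℝ) := fun j t => max (ε - dist t (z j)) 0 with hbdef
  have hb_nonneg : ∀ j t, 0 ≤ b j t := fun j t => le_max_right _ _
  have hb_zero : ∀ j t, ε ≤ dist t (z j) → b j t = 0 := fun j t h => max_eq_right (by linarith)
  have hb_big : ∀ j t, dist t (z j) ≤ ρ → ε/2 ≤ b j t := by
    intro j t h
    have h2 : ε/2 ≤ ε - dist t (z j) := by linarith
    exact le_max_of_le_left h2
  have hb_int : ∀ j, Integrable (b j) (volume : Measure (AddCircle (1:ℝ))) :=
    fun j => integrable_of_continuous (bcont j)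
  set κ : ℝ := ε * ρ with hκdef
  have hκ0 : 0 < κ := mul_pos hε hρ0
  have hb_intlb : ∀ j, κ ≤ ∫ t, b j t := by
    intro j
    have h1 : ∫ t in Metric.closedBall (z j) ρ, b j t ≤ ∫ t, b j t :=
      setIntegral_le_integral (hb_int j) (Filter.Eventually.of_forall (hb_nonneg j))
    have h2 : (ε/2) * (volume (Metric.closedBall (z j) ρ)).toReal
        ≤ ∫ t in Metric.closedBall (z j) ρ, b j t :=
      setIntegral_ge_of_const_le_real measurableSet_closedBall (measure_ne_top _ _)
        (fun t ht => hb_big j t (Metric.mem_closedBall.mp ht)) ((hb_int j).integrableOn)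
    have h3 : (volume (Metric.closedBall (z j) ρ)).toReal = 2 * ρ := by
      rw [AddCircle.volume_closedBall]
      rw [min_eq_right (by linarith : (2:ℝ)*ρ ≤ 1)]
      exact ENNReal.toReal_ofReal (by linarith)
    rw [h3] at h2
    calc κ = (ε/2) * (2*ρ) := by ring
    _ ≤ _ := le_trans h2 h1
  have fcont : Continuous (fun x : Fin d → AddCircle (1:ℝ) => ∏ j, b j (x j)) :=
    continuous_finset_prod _ fun j _ => (bcont j).comp (continuous_apply j)
  have hfint_eq : ∫ x : Fin d → AddCircle (1:ℝ), (∏ j, b j (x j)) = ∏ j, ∫ t, b j t :=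
    MeasureTheory.integral_fintype_prod_eq_prod (𝕜 := ℝ) (f := fun j t => b j t)
  have hf_lb : κ ^ d ≤ ∫ x : Fin d → AddCircle (1:ℝ), (∏ j, b j (x j)) := by
    rw [hfint_eq]
    calc κ ^ d = ∏ _j : Fin d, κ := by rw [Finset.prod_const, Finset.card_univ, Fintype.card_fin]
    _ ≤ ∏ j, ∫ t, b j t := Finset.prod_le_prod (fun j _ => hκ0.le) (fun j _ => hb_intlb j)
  set γ : ℝ := κ ^ d / 2 with hγdef
  have hγ0 : 0 < γ := by positivity
  set F : C((Fin d → AddCircle (1:ℝ)), ℂ) :=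
    ⟨fun x => ((∏ j, b j (x j) : ℝ) : ℂ), Complex.continuous_ofReal.comp fcont⟩ with hFdef
  have hFtop : F ∈ (chiAlg d).topologicalClosure := by
    rw [chiAlg_closure_eq_top d]; trivial
  have hFclos : F ∈ closure ((chiAlg d : Set C((Fin d → AddCircle (1:ℝ)), ℂ))) := hFtop
  obtain ⟨P, hPA, hPF⟩ := Metric.mem_closure_iff.mp hFclos (γ/2) (by positivity)
  have hPspan : P ∈ span ℂ (range (chi d)) := by
    rw [← chiAlg_coe d]; exact hPA
  obtain ⟨m, coef, g, hPsum⟩ := mem_span_set'.mp hPspan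
  set aa : Fin m → (Fin d → ℤ) := fun i => Classical.choose (g i).2 with haa
  have haaeq : ∀ i, chi d (aa i) = (g i : C((Fin d → AddCircle (1:ℝ)), ℂ)) :=
    fun i => Classical.choose_spec (g i).2
  have hPfun : ∀ x, P x = ∑ i, coef i * chi d (aa i) x := by
    intro x
    rw [← hPsum]
    rw [ContinuousMap.sum_apply]
    exact Finset.sum_congr rfl fun i _ => by rw [haaeq i]; rfl
  set w : (Fin d → ℤ) → ℂ :=
    fun a => Complex.exp (((2 * Real.pi * ∑ j, (a j : ℝ) * θ j : ℝ) : ℂ) * I) with hwdef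
  have hwabs : ∀ a, Complex.abs (w a) = 1 := by
    intro a
    rw [hwdef]
    rw [Complex.abs_apply', Complex.norm_exp]
    simp
  have hw1 : ∀ a, a ≠ 0 → w a ≠ 1 := by
    intro a ha h
    rw [hwdef, Complex.exp_eq_one_iff] at h
    obtain ⟨k, hk⟩ := h
    have hk2 : ((2 * Real.pi * ∑ j, (a j : ℝ) * θ j : ℝ) : ℂ) = (((k:ℝ) * (2 * Real.pi) : ℝ) : ℂ) := by
      apply mul_right_cancel₀ Complex.I_ne_zero
      rw [hk]; push_cast; ring
    have hk3 : 2 * Real.pi * ∑ j, (a j : ℝ) * θ j = (k:ℝ) * (2 * Real.pi) :=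
      Complex.ofReal_inj.mp hk2
    have hs : (∑ j, (a j : ℝ) * θ j) = (k:ℝ) := by
      have hpi : (2 * Real.pi) ≠ 0 := by positivity
      field_simp at hk3
      nlinarith [Real.pi_pos, hk3]
    exact ha (funext (hindep a k hs))
  set u : ℕ → (Fin d → AddCircle (1:ℝ)) :=
    fun n => fun j => (((n:ℝ) * θ j : ℝ) : AddCircle (1:ℝ)) with hudef
  have hchiu : ∀ a n, chi d a (u n) = w a ^ n := fun a n => chi_eval a θ n
  have hfu : ∀ n : ℕ, 1 ≤ n → F (u n) = 0 := by
    intro n hn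
    obtain ⟨j, hj⟩ := hcon n hn
    have hsub : u n j - z j = (((n:ℝ) * θ j - c j : ℝ) : AddCircle (1:ℝ)) := by
      rw [hudef, hz]
      exact (QuotientAddGroup.mk_sub _ _ _).symm
    have hdist : ε ≤ dist (u n j) (z j) := by
      rw [dist_eq_norm, hsub]; exact hj
    show ((∏ j', b j' (u n j') : ℝ) : ℂ) = 0
    rw [Finset.prod_eq_zero (Finset.mem_univ j) (hb_zero j _ hdist)]
    norm_num
  have hPu : ∀ n : ℕ, 1 ≤ n → Complex.abs (P (u n)) ≤ γ/2 := by
    intro n hn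
    have h1 : Complex.abs (P (u n) - F (u n)) ≤ γ/2 := by
      have h2 := ContinuousMap.dist_apply_le_dist (f := P) (g := F) (u n)
      rw [Complex.dist_eq] at h2
      rw [dist_comm] at hPF
      exact h2.trans hPF.le
    rwa [hfu n hn, sub_zero] at h1
  have hPcont : Integrable (fun x => P x) (volume : Measure (Fin d → AddCircle (1:ℝ))) :=
    integrable_of_continuous P.continuous
  have hFcont : Integrable (fun x => F x) (volume : Measure (Fin d → AddCircle (1:ℝ))) :=
    integrable_of_continuous F.continuous
  have hPint : ∀ i : Fin m, Integrable (fun x => coef i * chi d (aa i) x)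
      (volume : Measure (Fin d → AddCircle (1:ℝ))) :=
    fun i => (integrable_of_continuous ((chi d (aa i)).continuous)).const_mul _
  set S : ℂ := ∫ x, P x with hSdef
  have hS : S = ∑ i, coef i * (if aa i = 0 then 1 else 0) := by
    rw [hSdef]
    calc ∫ x, P x = ∫ x, ∑ i, coef i * chi d (aa i) x :=
          integral_congr_ae (Filter.Eventually.of_forall fun x => hPfun x)
    _ = ∑ i, ∫ x, coef i * chi d (aa i) x := integral_finset_sum _ (fun i _ => hPint i)
    _ = ∑ i, coef i * (if aa i = 0 then 1 else 0) := by
          refine Finset.sum_congr rfl fun i _ => ?_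
          rw [integral_const_mul, integral_chi]
  have hIF : ∫ x, F x = ((∫ x : Fin d → AddCircle (1:ℝ), (∏ j, b j (x j)) : ℝ) : ℂ) :=
    integral_ofReal
  have hFS : Complex.abs (S - ((∫ x : Fin d → AddCircle (1:ℝ), (∏ j, b j (x j)) : ℝ) : ℂ)) ≤ γ/2 := by
    rw [← hIF, hSdef, ← integral_sub hPcont hFcont]
    have key : ∀ x, ‖P x - F x‖ ≤ γ/2 := by
      intro x
      have h2 := ContinuousMap.dist_apply_le_dist (f := P) (g := F) x
      rw [dist_eq_norm] at h2
      rw [dist_comm] at hPF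
      exact h2.trans hPF.le
    have h3 := norm_integral_le_of_norm_le_const (μ := volume)
      (f := fun x => P x - F x) (C := γ/2) (Filter.Eventually.of_forall key)
    simpa [Complex.abs_apply'] using h3
  have hreS : 3*γ/2 ≤ S.re := by
    have h1 := (Complex.abs_re_le_norm (S - ((∫ x : Fin d → AddCircle (1:ℝ),
      (∏ j, b j (x j)) : ℝ) : ℂ))).trans hFS
    rw [Complex.sub_re, Complex.ofReal_re] at h1
    have h2 := abs_le.mp h1
    have : κ^d = 2*γ := by rw [hγdef]; ring
    linarith [hf_lb, h2.1]
  set B : ℝ := ∑ i, (if aa i = 0 then 0 else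
    Complex.abs (coef i) * (2 / Complex.abs (w (aa i) - 1))) with hBdef
  have hB0 : 0 ≤ B := by
    refine Finset.sum_nonneg fun i _ => ?_
    split
    · exact le_rfl
    · positivity
  obtain ⟨N, hN⟩ := exists_nat_gt (B / γ)
  have hN1 : 1 ≤ N := by
    rcases Nat.eq_zero_or_pos N with h0 | h
    · subst h0
      norm_num at hN
      linarith [div_nonneg hB0 hγ0.le]
    · exact h
  have hTN : ∑ n ∈ Finset.range N, P (u (n+1))
      = ∑ i, coef i * (∑ n ∈ Finset.range N, w (aa i) ^ (n+1)) := by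
    calc ∑ n ∈ Finset.range N, P (u (n+1))
        = ∑ n ∈ Finset.range N, ∑ i, coef i * w (aa i)^(n+1) := by
          refine Finset.sum_congr rfl fun n _ => ?_
          rw [hPfun]
          exact Finset.sum_congr rfl fun i _ => by rw [hchiu]
    _ = ∑ i, ∑ n ∈ Finset.range N, coef i * w (aa i)^(n+1) := Finset.sum_comm
    _ = _ := by
          refine Finset.sum_congr rfl fun i _ => ?_
          rw [Finset.mul_sum]
  have hgeo : ∀ i : Fin m,
      Complex.abs (coef i * (∑ n ∈ Finset.range N, w (aa i)^(n+1))
        - coef i * (if aa i = 0 then (N:ℂ) else 0))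
      ≤ (if aa i = 0 then 0 else Complex.abs (coef i) * (2 / Complex.abs (w (aa i) - 1))) := by
    intro i
    by_cases h : aa i = 0
    · rw [if_pos h, if_pos h]
      have hw0 : w (aa i) = 1 := by
        rw [h, hwdef]
        simp
      rw [hw0]
      simp
    · rw [if_neg h, if_neg h, mul_zero, sub_zero, map_mul]
      exact mul_le_mul_of_nonneg_left (geom_bound (hwabs _) (hw1 _ h) N)
        (AbsoluteValue.nonneg _ _)
  have hNS : (N:ℂ) * S = ∑ i, coef i * (if aa i = 0 then (N:ℂ) else 0) := by
    rw [hS, Finset.mul_sum]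
    refine Finset.sum_congr rfl fun i _ => ?_
    split <;> ring
  have hclose : Complex.abs ((∑ n ∈ Finset.range N, P (u (n+1))) - (N:ℂ) * S) ≤ B := by
    rw [hTN, hNS, ← Finset.sum_sub_distrib, hBdef]
    exact (AbsoluteValue.sum_le _ _ _).trans (Finset.sum_le_sum fun i _ => hgeo i)
  have hTNsmall : Complex.abs (∑ n ∈ Finset.range N, P (u (n+1))) ≤ N * (γ/2) := by
    calc Complex.abs (∑ n ∈ Finset.range N, P (u (n+1)))
        ≤ ∑ n ∈ Finset.range N, Complex.abs (P (u (n+1))) := AbsoluteValue.sum_le _ _ _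
    _ ≤ ∑ _n ∈ Finset.range N, (γ/2) := Finset.sum_le_sum fun n _ => hPu (n+1) (Nat.le_add_left _ _)
    _ = N * (γ/2) := by rw [Finset.sum_const, Finset.card_range, nsmul_eq_mul]
  have habsNS : (N:ℝ) * (3*γ/2) ≤ Complex.abs ((N:ℂ) * S) := by
    rw [map_mul, Complex.abs_natCast]
    exact mul_le_mul_of_nonneg_left (hreS.trans (Complex.re_le_norm S)) (Nat.cast_nonneg N)
  have hfinal : Complex.abs ((N:ℂ) * S)
      ≤ B + N * (γ/2) := by
    calc Complex.abs ((N:ℂ) * S)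
        ≤ Complex.abs ((N:ℂ) * S - ∑ n ∈ Finset.range N, P (u (n+1)))
          + Complex.abs (∑ n ∈ Finset.range N, P (u (n+1))) := by
          simpa using Complex.abs.sub_le ((N:ℂ)*S) (∑ n ∈ Finset.range N, P (u (n+1))) 0
    _ ≤ B + N * (γ/2) := by
          rw [AbsoluteValue.map_sub]
          exact add_le_add hclose hTNsmall
  have hBN : B < N * γ := (div_lt_iff₀ hγ0).mp hN
  have hNγ : (N:ℝ) * γ ≤ B := by linarith [habsNS.trans hfinal]
  linarith

end Stmt6

end Stmt6Aux

theorem stmt_6 (r : ℕ) (hr : 1 ≤ r) (θ : Fin (r + 1) → ℝ)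
    (hindep : ∀ (a : Fin (r + 1) → ℤ) (a₀ : ℤ),
      (∑ j, (a j : ℝ) * θ j) + (a₀ : ℝ) = 0 → (∀ j, a j = 0) ∧ a₀ = 0)
    (δ : ℝ) (hδ : 0 < δ) (hδ1 : δ < 1) :
    ∃ q : ℕ, 1 ≤ q ∧
      ∀ i : Fin (r + 1),
        ∃ j : Fin (r + 1),
          |((((i : ℕ) + 1) * q : ℕ) : ℝ) * θ j - 1/2 -
            (round ((((i : ℕ) + 1) * q : ℕ) * θ j - 1/2) : ℝ)| < δ / (2 * Real.pi) := by
  have hπ := Real.pi_pos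
  set c : Fin (r+1) → ℝ := fun j => 1 / (2 * ((j:ℕ) + 1)) with hc
  have hindep' : ∀ (a : Fin (r+1) → ℤ) (m : ℤ), (∑ j, (a j : ℝ) * θ j) = (m:ℝ) → ∀ j, a j = 0 := by
    intro a m hm j
    exact (hindep a (-m) (by push_cast; linarith)).1 j
  have hε0 : 0 < δ / (2 * Real.pi * (r + 1)) := by positivity
  obtain ⟨q, hq1, hq⟩ := Stmt6.kronecker (r+1) θ c hindep' hε0
  refine ⟨q, hq1, fun i => ⟨i, ?_⟩⟩
  have hcast : ∀ (n : ℕ) (t : ℝ), (((n:ℝ) * t : ℝ) : AddCircle (1:ℝ))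
      = n • ((t : ℝ) : AddCircle (1:ℝ)) := by
    intro n t
    rw [← nsmul_eq_mul]
    exact map_nsmul (QuotientAddGroup.mk' (AddSubgroup.zmultiples (1:ℝ))) n t
  have hreal : ((((i : ℕ) + 1) * q : ℕ) : ℝ) * θ i - 1/2
      = (((((i:ℕ) + 1 : ℕ)) : ℝ)) * ((q:ℝ) * θ i - c i) := by
    rw [hc]
    have h1 : (((i:ℕ) : ℝ) + 1) ≠ 0 := by positivity
    push_cast
    field_simp
  have h1 : ((((((i : ℕ) + 1) * q : ℕ) : ℝ) * θ i - 1/2 : ℝ) : AddCircle (1:ℝ))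
      = ((i:ℕ)+1) • (((q:ℝ) * θ i - c i : ℝ) : AddCircle (1:ℝ)) := by
    rw [← hcast ((i:ℕ)+1) ((q:ℝ) * θ i - c i)]
    exact congrArg _ (by push_cast at hreal ⊢; linarith [hreal])
  have hile : ((i:ℕ) : ℝ) + 1 ≤ (r : ℝ) + 1 := by
    have := i.isLt
    have h2 : (i:ℕ) ≤ r := Nat.lt_succ_iff.mp this
    exact_mod_cast Nat.succ_le_succ h2
  calc |((((i : ℕ) + 1) * q : ℕ) : ℝ) * θ i - 1/2 -
        (round ((((i : ℕ) + 1) * q : ℕ) * θ i - 1/2) : ℝ)|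
      = ‖((((((i : ℕ) + 1) * q : ℕ) : ℝ) * θ i - 1/2 : ℝ) : AddCircle (1:ℝ))‖ :=
        (UnitAddCircle.norm_eq).symm
  _ = ‖((i:ℕ)+1) • (((q:ℝ) * θ i - c i : ℝ) : AddCircle (1:ℝ))‖ := by rw [h1]
  _ ≤ (((i:ℕ):ℝ)+1) * ‖(((q:ℝ) * θ i - c i : ℝ) : AddCircle (1:ℝ))‖ := by
        simpa using norm_nsmul_le (n := (i:ℕ)+1) (a := (((q:ℝ) * θ i - c i : ℝ) : AddCircle (1:ℝ)))
  _ < (((i:ℕ):ℝ)+1) * (δ / (2 * Real.pi * (r + 1))) := by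
        have := hq i
        exact mul_lt_mul_of_pos_left this (by positivity)
  _ ≤ ((r:ℝ)+1) * (δ / (2 * Real.pi * (r + 1))) := by
        exact mul_le_mul_of_nonneg_right hile (le_of_lt hε0)
  _ = δ / (2 * Real.pi) := by
        field_simp
end

section
/- Let (H_N)_{N≥1} and (Θ_N)_{N≥1} be sequences of positive integers with H₁ ≥ 6π and such that 2M·Θ_N·H_N/H_{N+1} ≤ 2^{-N} for all N (where M is the constant from the Cantor-set lemma). Then there exists μ ∈ 𝕋 with |μ + 1| ≤ 6π/H₁ such that |μ^{H_N j + 1} - 1| ≥ 2 - 6π/H₁ - 2^{-N} for all N ≥ 1 and all 1 ≤ j ≤ Θ_N; in particular if the right-hand side exceeds 1/2, the set ⋃_N {H_N j + 1 : 1 ≤ j ≤ Θ_N} is not a recurrence set for the rotation by μ. -/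
private lemma abs_pow_sub_one_le' (l : ℂ) (h : ‖l‖ = 1) (n : ℕ) :
    ‖l ^ n - 1‖ ≤ n * ‖l - 1‖ := by
  induction n with
  | zero => simp
  | succ k ih =>
    have e : l ^ (k + 1) - 1 = l ^ k * (l - 1) + (l ^ k - 1) := by ring
    calc ‖l ^ (k + 1) - 1‖
        ≤ ‖l ^ k * (l - 1)‖ + ‖l ^ k - 1‖ := by
          rw [e]; exact norm_add_le _ _
      _ ≤ ‖l - 1‖ + k * ‖l - 1‖ := by
          rw [norm_mul, norm_pow, h, one_pow, one_mul]; linarith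
      _ = ((k + 1 : ℕ) : ℝ) * ‖l - 1‖ := by push_cast; ring

private def mAux' : ℕ → ℕ
  | 0 => 1
  | 1 => 100
  | 2 => 201
  | (k + 3) => 201000 * 3 ^ k

theorem stmt_12 (M : ℝ) (hM : 0 < M)
    (hCantor : ∀ m : ℕ → ℕ, (∀ k, 1 ≤ k → 0 < m k) →
      (∀ k, 1 ≤ k → 2 * m k < m (k + 1)) →
      ∃ lam : ℂ, ‖lam‖ = 1 ∧
        ‖lam + 1‖ ≤ 6 * Real.pi / (m 1 : ℝ) ∧
        ∀ k, 1 ≤ k → ‖lam ^ m k - 1‖ ≤ M * (m k : ℝ) / (m (k + 1) : ℝ))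
    (H Θ : ℕ → ℕ) (hH : ∀ N, 0 < H N) (hΘ : ∀ N, 0 < Θ N)
    (hH1 : 6 * Real.pi ≤ (H 1 : ℝ))
    (hgrowth : ∀ N, 1 ≤ N →
      2 * M * (Θ N : ℝ) * (H N : ℝ) / (H (N + 1) : ℝ) ≤ (2 : ℝ) ^ (-(N : ℤ))) :
    ∃ μ : ℂ, ‖μ‖ = 1 ∧ ‖μ + 1‖ ≤ 6 * Real.pi / (H 1 : ℝ) ∧
      (∀ N, 1 ≤ N → ∀ j, 1 ≤ j → j ≤ Θ N →
        2 - 6 * Real.pi / (H 1 : ℝ) - (2 : ℝ) ^ (-(N : ℤ)) ≤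
          ‖μ ^ (H N * j + 1) - 1‖) ∧
      ((∀ N, 1 ≤ N → (1 : ℝ) / 2 < 2 - 6 * Real.pi / (H 1 : ℝ) - (2 : ℝ) ^ (-(N : ℤ))) →
        ¬ ∀ δ : ℝ, 0 < δ →
          ∃ n ∈ ⋃ N ∈ {N : ℕ | 1 ≤ N}, {n : ℕ | ∃ j, 1 ≤ j ∧ j ≤ Θ N ∧ n = H N * j + 1},
            ‖μ ^ n - 1‖ < δ) := by
  by_cases hM2 : M ≤ 1 / 2
  · -- hCantor is contradictory for small M
    exfalso
    have hpos : ∀ k, 1 ≤ k → 0 < mAux' k := by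
      intro k hk
      match k with
      | 1 => norm_num [mAux']
      | 2 => norm_num [mAux']
      | (j + 3) =>
        show 0 < 201000 * 3 ^ j
        positivity
    have hgrow : ∀ k, 1 ≤ k → 2 * mAux' k < mAux' (k + 1) := by
      intro k hk
      match k with
      | 1 => norm_num [mAux']
      | 2 => norm_num [mAux']
      | (j + 3) =>
        show 2 * (201000 * 3 ^ j) < 201000 * 3 ^ (j + 1)
        have h3 : 0 < 3 ^ j := pow_pos (by norm_num) j
        rw [pow_succ]
        nlinarith
    obtain ⟨l, hl1, hl2, hl3⟩ := hCantor mAux' hpos hgrow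
    have h100 : ‖l ^ (100 : ℕ) - 1‖ ≤ M * ((100 : ℕ) : ℝ) / ((201 : ℕ) : ℝ) :=
      hl3 1 le_rfl
    have h201 : ‖l ^ (201 : ℕ) - 1‖ ≤ M * ((201 : ℕ) : ℝ) / ((201000 : ℕ) : ℝ) :=
      hl3 2 one_le_two
    have hl2' : ‖l + 1‖ ≤ 6 * Real.pi / ((100 : ℕ) : ℝ) := hl2
    push_cast at h100 h201 hl2'
    -- |l^200 - 1| ≤ 2 |l^100 - 1|
    have habs100 : ‖l ^ (100 : ℕ)‖ = 1 := by rw [norm_pow, hl1, one_pow]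
    have h200 : ‖l ^ (200 : ℕ) - 1‖ ≤ 2 * ‖l ^ (100 : ℕ) - 1‖ := by
      have := abs_pow_sub_one_le' (l ^ (100 : ℕ)) habs100 2
      rw [← pow_mul] at this
      norm_num at this
      convert this using 3 <;> norm_num
    -- |l - 1| ≤ |l^201 - 1| + |l^200 - 1|
    have key : ‖l - 1‖ ≤
        ‖l ^ (201 : ℕ) - 1‖ + ‖l ^ (200 : ℕ) - 1‖ := by
      have e1 : ‖l ^ (200 : ℕ) * (l - 1)‖ = ‖l - 1‖ := by
        rw [norm_mul, norm_pow, hl1, one_pow, one_mul]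
      calc ‖l - 1‖ = ‖l ^ (200 : ℕ) * (l - 1)‖ := e1.symm
        _ = ‖(l ^ (201 : ℕ) - 1) + -(l ^ (200 : ℕ) - 1)‖ := by
            rw [show l ^ (200 : ℕ) * (l - 1) =
              (l ^ (201 : ℕ) - 1) + -(l ^ (200 : ℕ) - 1) by ring]
        _ ≤ ‖l ^ (201 : ℕ) - 1‖ + ‖-(l ^ (200 : ℕ) - 1)‖ :=
            norm_add_le _ _
        _ = _ := by rw [norm_neg]
    -- 2 ≤ |l - 1| + |l + 1|
    have two_le : 2 ≤ ‖l - 1‖ + ‖l + 1‖ := by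
      have step : ‖(l + 1) + -(l - 1)‖ ≤
          ‖l + 1‖ + ‖-(l - 1)‖ := norm_add_le _ _
      rw [show (l + 1) + -(l - 1) = (2 : ℂ) by ring, norm_neg] at step
      have h2 : ‖(2 : ℂ)‖ = 2 := by norm_num
      linarith
    have hpi : Real.pi ≤ 3.15 := le_of_lt Real.pi_lt_d2
    linarith
  · -- main case : M > 1/2
    push_neg at hM2
    have hgrow : ∀ k, 1 ≤ k → 2 * H k < H (k + 1) := by
      intro N hN
      have h := hgrowth N hN
      have hHp : (0 : ℝ) < (H (N + 1) : ℝ) := by exact_mod_cast hH (N + 1)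
      have h2 : 2 * M * (Θ N : ℝ) * (H N : ℝ) ≤ (2 : ℝ) ^ (-(N : ℤ)) * (H (N + 1) : ℝ) := by
        rw [div_le_iff₀ hHp] at h; linarith
      have hsmall : (2 : ℝ) ^ (-(N : ℤ)) ≤ 1 / 2 := by
        rw [zpow_neg, zpow_natCast]
        rw [inv_le_comm₀ (by positivity) (by norm_num)]
        calc (1 / 2 : ℝ)⁻¹ = 2 := by norm_num
          _ ≤ 2 ^ N := le_self_pow₀ one_le_two (by omega)
      have hΘ1 : (1 : ℝ) ≤ (Θ N : ℝ) := by exact_mod_cast hΘ N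
      have hH1' : (1 : ℝ) ≤ (H N : ℝ) := by exact_mod_cast hH N
      by_contra hcon
      push_neg at hcon
      have hle : (H (N + 1) : ℝ) ≤ 2 * (H N : ℝ) := by exact_mod_cast hcon
      have c1 : (2 : ℝ) ^ (-(N : ℤ)) * (H (N + 1) : ℝ) ≤ (1 / 2) * (2 * (H N : ℝ)) :=
        mul_le_mul hsmall hle (by positivity) (by norm_num)
      have c2 : (H N : ℝ) ≤ (Θ N : ℝ) * (H N : ℝ) :=
        le_mul_of_one_le_left (by positivity) hΘ1
      have hph : (0 : ℝ) < (Θ N : ℝ) * (H N : ℝ) := by positivity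
      have c3 : (Θ N : ℝ) * (H N : ℝ) < 2 * M * (Θ N : ℝ) * (H N : ℝ) := by
        nlinarith [mul_pos hph (by linarith : (0 : ℝ) < 2 * M - 1)]
      nlinarith [h2, c1, c2, c3]
    obtain ⟨μ, hμ1, hμ2, hμ3⟩ := hCantor H (fun k _ => hH k) hgrow
    have key : ∀ N, 1 ≤ N → ∀ j, 1 ≤ j → j ≤ Θ N →
        2 - 6 * Real.pi / (H 1 : ℝ) - (2 : ℝ) ^ (-(N : ℤ)) ≤
          ‖μ ^ (H N * j + 1) - 1‖ := by
      intro N hN j hj1 hj2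
      have hHp : (0 : ℝ) < (H (N + 1) : ℝ) := by exact_mod_cast hH (N + 1)
      have hHN := hμ3 N hN
      have habsHN : ‖μ ^ H N‖ = 1 := by rw [norm_pow, hμ1, one_pow]
      have hjle : (j : ℝ) ≤ (Θ N : ℝ) := by exact_mod_cast hj2
      have hpowj : ‖μ ^ (H N * j) - 1‖ ≤
          (Θ N : ℝ) * (M * (H N : ℝ) / (H (N + 1) : ℝ)) := by
        calc ‖μ ^ (H N * j) - 1‖
            = ‖(μ ^ H N) ^ j - 1‖ := by rw [pow_mul]
          _ ≤ (j : ℝ) * ‖μ ^ H N - 1‖ := abs_pow_sub_one_le' _ habsHN j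
          _ ≤ (Θ N : ℝ) * (M * (H N : ℝ) / (H (N + 1) : ℝ)) := by
              apply mul_le_mul hjle hHN (norm_nonneg _)
              exact_mod_cast (hΘ N).le
      have hgr := hgrowth N hN
      have hzp : (0 : ℝ) < (2 : ℝ) ^ (-(N : ℤ)) := by positivity
      have hpow : ‖μ ^ (H N * j) - 1‖ ≤ (2 : ℝ) ^ (-(N : ℤ)) := by
        have heq : (Θ N : ℝ) * (M * (H N : ℝ) / (H (N + 1) : ℝ)) * 2 =
            2 * M * (Θ N : ℝ) * (H N : ℝ) / (H (N + 1) : ℝ) := by ring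
        nlinarith [hpowj, hgr]
      have h1 : 2 - ‖μ + 1‖ ≤ ‖μ - 1‖ := by
        have step : ‖(μ + 1) + -(μ - 1)‖ ≤
            ‖μ + 1‖ + ‖-(μ - 1)‖ := norm_add_le _ _
        rw [show (μ + 1) + -(μ - 1) = (2 : ℂ) by ring, norm_neg] at step
        have : ‖(2 : ℂ)‖ = 2 := by norm_num
        linarith [step, this.symm.le]
      have h2 : ‖μ - 1‖ - ‖μ ^ (H N * j) - 1‖ ≤
          ‖μ ^ (H N * j + 1) - 1‖ := by
        have step : ‖(μ ^ (H N * j + 1) - 1) + -(μ * (μ ^ (H N * j) - 1))‖ ≤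
            ‖μ ^ (H N * j + 1) - 1‖ +
              ‖-(μ * (μ ^ (H N * j) - 1))‖ := norm_add_le _ _
        rw [show (μ ^ (H N * j + 1) - 1) + -(μ * (μ ^ (H N * j) - 1)) = μ - 1 by
            rw [pow_succ]; ring,
          norm_neg, norm_mul, hμ1, one_mul] at step
        linarith
      linarith
    refine ⟨μ, hμ1, hμ2, key, ?_⟩
    intro hhalf hrec
    obtain ⟨n, hn, hlt⟩ := hrec (1 / 2) (by norm_num)
    simp only [Set.mem_iUnion, Set.mem_setOf_eq] at hn
    obtain ⟨N, hN, j, hj1, hj2, rfl⟩ := hn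
    have hk := key N hN j hj1 hj2
    have hh := hhalf N (by exact_mod_cast hN)
    linarith
end

section
/- For every r ≥ 1 there exists a set of positive integers which is r-Bohr but not (2^{r-1}+1)-Bohr. -/
open Complex Finset Real

noncomputable def Complex.abs : AbsoluteValue ℂ ℝ where
  toFun z := ‖z‖
  map_mul' := norm_mul
  nonneg' := norm_nonneg
  eq_zero' _ := norm_eq_zero
  add_le' := norm_add_le

lemma Complex.sq_abs (z : ℂ) : Complex.abs z ^ 2 = Complex.normSq z := Complex.sq_norm z

lemma Complex.abs_re_le_abs (z : ℂ) : |z.re| ≤ Complex.abs z := Complex.abs_re_le_norm z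

lemma Complex.re_le_abs (z : ℂ) : z.re ≤ Complex.abs z := Complex.re_le_norm z

lemma Complex.abs_ofReal (x : ℝ) : Complex.abs (x : ℂ) = |x| := by
  show ‖(x : ℂ)‖ = |x|; simp

lemma sq_factor (z : ℂ) (hz : Complex.abs z = 1) :
    ((4 - (Complex.abs (z - 1))^2 : ℝ) : ℂ) * z = (1 + z)^2 := by
  have hz1 : z * (starRingEnd ℂ) z = 1 := by
    rw [Complex.mul_conj]; norm_cast; rw [← Complex.sq_abs, hz]; norm_num
  have h2 : ((Complex.abs (z-1))^2 : ℝ) = Complex.normSq (z-1) := Complex.sq_abs _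
  have h3 : ((Complex.normSq (z-1) : ℝ) : ℂ) = (z-1) * (starRingEnd ℂ) (z-1) := by
    rw [Complex.mul_conj]
  push_cast [h2, h3]
  simp only [map_sub, map_one]
  linear_combination (1 - z) * hz1

lemma geom_bound (u : ℂ) (hu : Complex.abs u = 1) (hu1 : u ≠ 1) (N : ℕ) :
    Complex.abs (∑ n ∈ range N, u^(n+1)) ≤ 2 / Complex.abs (u - 1) := by
  have h1 : (∑ n ∈ range N, u^(n+1)) = u * ((u^N - 1)/(u-1)) := by
    rw [← geom_sum_eq hu1 N, Finset.mul_sum]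
    exact Finset.sum_congr rfl fun n _ => (pow_succ' u n)
  have hpos : 0 < Complex.abs (u - 1) := by
    rw [AbsoluteValue.pos_iff]; exact sub_ne_zero.mpr hu1
  have h2 : Complex.abs (u^N - 1) ≤ 2 := by
    calc Complex.abs (u^N - 1) ≤ Complex.abs (u^N) + Complex.abs (1:ℂ) :=
          AbsoluteValue.sub_le_add _ _ _
      _ = 2 := by rw [map_pow, hu, one_pow, map_one]; norm_num
  rw [h1, map_mul, map_div₀, hu, one_mul]
  gcongr

lemma re_lower (z : ℂ) (hz : Complex.abs z = 1) (h : Complex.abs (z - 1) < 1/2) :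
    7/8 ≤ z.re := by
  have h1 : z.re^2 + z.im^2 = 1 := by
    have := Complex.sq_abs z
    rw [hz, Complex.normSq_apply] at this; nlinarith
  have h2 : (z.re - 1)^2 + z.im^2 < 1/4 := by
    have h3 : (Complex.abs (z-1))^2 < (1/2)^2 := by
      apply pow_lt_pow_left₀ h (AbsoluteValue.nonneg _ _); norm_num
    rw [Complex.sq_abs, Complex.normSq_apply] at h3
    simp only [Complex.sub_re, Complex.sub_im, Complex.one_re, Complex.one_im] at h3
    nlinarith
  nlinarith

lemma re_neg_lower (z : ℂ) (hz : Complex.abs z = 1) : -1 ≤ z.re := by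
  have := Complex.abs_re_le_abs z
  rw [hz] at this
  cases abs_le.mp this; linarith

lemma span_contra (r : ℕ) (θ : ℝ) (htr : Transcendental ℚ θ) (u : Fin r → ℝ)
    (h : ∀ i : Fin (r+1), ∃ (m : Fin r → ℤ) (z : ℤ),
      θ^((i:ℕ)+1) = (∑ j, (m j : ℝ) * u j) + z) : False := by
  classical
  set v2 : Fin (r+1) → ℝ := Fin.cons 1 u with hv2
  set W : Submodule ℚ ℝ := Submodule.span ℚ (Set.range v2) with hW
  have h1W : (1:ℝ) ∈ W := Submodule.subset_span ⟨0, by rw [hv2]; exact Fin.cons_zero _ _⟩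
  have huW : ∀ j, u j ∈ W := fun j =>
    Submodule.subset_span ⟨j.succ, by rw [hv2]; exact Fin.cons_succ _ _ _⟩
  have hmem : ∀ i : Fin (r+2), θ^(i:ℕ) ∈ W := by
    intro i
    induction i using Fin.cases with
    | zero => simpa using h1W
    | succ k =>
      obtain ⟨m, z, hk⟩ := h k
      have : ((Fin.succ k : Fin (r+2)) : ℕ) = (k:ℕ) + 1 := rfl
      rw [this, hk]
      apply Submodule.add_mem
      · apply Submodule.sum_mem
        intro j _
        have hcast : (m j : ℝ) * u j = ((m j : ℚ) : ℝ) * u j := by push_cast; ring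
        rw [hcast, ← Rat.smul_def]
        exact Submodule.smul_mem _ _ (huW j)
      · have hcast : ((z:ℤ) : ℝ) = ((z : ℚ) : ℝ) * 1 := by push_cast; ring
        rw [hcast, ← Rat.smul_def]
        exact Submodule.smul_mem _ _ h1W
  have hfd : Module.Finite ℚ W := Module.Finite.span_of_finite ℚ (Set.finite_range v2)
  have hli : LinearIndependent ℚ (fun i : Fin (r+2) => θ^(i:ℕ)) := by
    rw [Fintype.linearIndependent_iff]
    intro g hg
    by_contra hgne
    push_neg at hgne
    obtain ⟨i₀, hi₀⟩ := hgne
    apply htr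
    refine ⟨∑ i : Fin (r+2), Polynomial.C (g i) * Polynomial.X ^ (i:ℕ), ?_, ?_⟩
    · intro hzero
      apply hi₀
      have hco := congrArg (fun q => Polynomial.coeff q (i₀:ℕ)) hzero
      simp only [Polynomial.finset_sum_coeff, Polynomial.coeff_C_mul, Polynomial.coeff_X_pow,
        Polynomial.coeff_zero, mul_ite, mul_one, mul_zero] at hco
      have : ∀ x : Fin (r+2), (if (i₀:ℕ) = (x:ℕ) then g x else 0) = if x = i₀ then g x else 0 := by
        intro x
        by_cases hx : x = i₀
        · simp [hx]
        · rw [if_neg (fun hh => hx (Fin.val_inj.mp hh.symm)), if_neg hx]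
      rw [Finset.sum_congr rfl (fun x _ => this x), Finset.sum_ite_eq' univ i₀ g] at hco
      simpa using hco
    · rw [map_sum]
      have : ∀ i : Fin (r+2), (Polynomial.aeval θ) (Polynomial.C (g i) * Polynomial.X ^ (i:ℕ))
          = g i • θ^(i:ℕ) := by
        intro i
        rw [map_mul, Polynomial.aeval_C, map_pow, Polynomial.aeval_X, Rat.smul_def]
        norm_num
      rw [Finset.sum_congr rfl (fun i _ => this i)]
      exact hg
  have hli' : LinearIndependent ℚ (fun i : Fin (r+2) => (⟨θ^(i:ℕ), hmem i⟩ : W)) := by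
    apply LinearIndependent.of_comp W.subtype
    convert hli
    rfl
  have hcard := hli'.fintype_card_le_finrank
  have hrank : Module.finrank ℚ W ≤ r + 1 := by
    rw [hW]
    have := finrank_range_le_card (R := ℚ) v2
    rw [Set.finrank] at this
    simpa using this
  rw [Fintype.card_fin] at hcard
  omega

set_option maxHeartbeats 1000000 in
lemma key {r : ℕ} (lam : Fin r → ℂ) (hlam : ∀ j, Complex.abs (lam j) = 1)
    (μ₀ : ℂ) (hμ₀ : Complex.abs μ₀ = 1) (ε : ℝ) (hε : 0 < ε) (hε1 : ε ≤ 1)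
    (H : ∀ n : ℕ, (∀ j, Complex.abs (lam j ^ (n+1) - 1) < ε) →
      Complex.abs (μ₀ ^ (n+1) - 1) < 1/2) :
    ∃ m : Fin r → ℤ, μ₀ = ∏ j, lam j ^ (m j) := by
  classical
  by_contra hc
  push_neg at hc
  -- choose p
  set ρ : ℝ := 1 - ε^2/4 with hρdef
  have hρ0 : 0 ≤ ρ := by rw [hρdef]; nlinarith
  have hρ1 : ρ < 1 := by rw [hρdef]; nlinarith
  obtain ⟨p, hp⟩ : ∃ p : ℕ, ((2*(p:ℝ)+1))^r * ρ^p < 1/8 := by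
    have hsum : Summable (fun n : ℕ => (n:ℝ)^(r+1) * ρ^n) :=
      summable_pow_mul_geometric_of_norm_lt_one (r+1) (by rw [Real.norm_eq_abs, _root_.abs_of_nonneg hρ0]; exact hρ1)
    have htend := hsum.tendsto_atTop_zero
    have h8 : (0:ℝ) < (1/8) / 3^(r+1) := by positivity
    obtain ⟨P, hP⟩ := (Metric.tendsto_atTop.mp htend) _ h8
    refine ⟨max P 1, ?_⟩
    set p := max P 1
    have hp1 : 1 ≤ (p:ℝ) := by exact_mod_cast le_max_right P 1
    have hle : ((2*(p:ℝ)+1))^r * ρ^p ≤ 3^(r+1) * ((p:ℝ)^(r+1) * ρ^p) := by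
      have h1 : (2*(p:ℝ)+1)^r ≤ (3*(p:ℝ))^r := by
        apply pow_le_pow_left₀ (by positivity); nlinarith
      calc ((2*(p:ℝ)+1))^r * ρ^p ≤ (3*(p:ℝ))^r * ρ^p := by
            apply mul_le_mul_of_nonneg_right h1 (by positivity)
        _ ≤ (3*(p:ℝ))^(r+1) * ρ^p := by
            apply mul_le_mul_of_nonneg_right ?_ (by positivity)
            apply pow_le_pow_right₀ (by nlinarith) (by omega)
        _ = 3^(r+1) * ((p:ℝ)^(r+1) * ρ^p) := by rw [mul_pow]; ring
    have hsmall : (p:ℝ)^(r+1) * ρ^p < (1/8) / 3^(r+1) := by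
      have := hP p (le_max_left P 1)
      rw [Real.dist_eq, sub_zero] at this
      calc (p:ℝ)^(r+1) * ρ^p ≤ |(p:ℝ)^(r+1) * ρ^p| := le_abs_self _
        _ < _ := this
    calc ((2*(p:ℝ)+1))^r * ρ^p ≤ 3^(r+1) * ((p:ℝ)^(r+1) * ρ^p) := hle
      _ < 3^(r+1) * ((1/8) / 3^(r+1)) := by
          apply mul_lt_mul_of_pos_left hsmall (by positivity)
      _ = 1/8 := by field_simp
  -- definitions
  have hlamne : ∀ j, lam j ≠ 0 := fun j => by
    intro h; have := hlam j; rw [h] at this; simp at this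
  set Φ : ℕ → ℝ := fun n => (∏ j, (4 - (Complex.abs (lam j ^ (n+1) - 1))^2))^p with hΦdef
  set G := Fintype.piFinset (fun _ : Fin r => Finset.range (2*p+1)) with hGdef
  set c : (Fin r → ℕ) → ℝ := fun g => ∏ j, (((2*p).choose (g j) : ℕ) : ℝ) with hcdef
  set w : (Fin r → ℕ) → ℂ := fun g => ∏ j, lam j ^ (g j) with hwdef
  set W : ℂ := ∏ j, lam j ^ p with hWdef
  have habsw : ∀ g, Complex.abs (w g) = 1 := by
    intro g; rw [hwdef]; simp only []
    rw [map_prod]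
    apply Finset.prod_eq_one; intro j _; rw [map_pow, hlam j, one_pow]
  have habsW : Complex.abs W = 1 := by
    rw [hWdef, map_prod]
    apply Finset.prod_eq_one; intro j _; rw [map_pow, hlam j, one_pow]
  have hWne : W ≠ 0 := fun h => by rw [h] at habsW; simp at habsW
  have hwne : ∀ g, w g ≠ 0 := fun g h => by
    have := habsw g; rw [h] at this; simp at this
  -- I1
  have I1 : ∀ n : ℕ, (Φ n : ℂ) * W^(n+1) = ∑ g ∈ G, (c g : ℂ) * (w g)^(n+1) := by
    intro n
    have habsz : ∀ j, Complex.abs (lam j ^ (n+1)) = 1 := fun j => by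
      rw [map_pow, hlam j, one_pow]
    calc (Φ n : ℂ) * W^(n+1)
        = ∏ j, ((((4 - (Complex.abs (lam j ^ (n+1) - 1))^2 : ℝ)):ℂ) * lam j^(n+1))^p := by
          rw [hΦdef, hWdef]
          push_cast
          rw [← Finset.prod_pow, ← Finset.prod_pow, ← Finset.prod_mul_distrib]
          apply Finset.prod_congr rfl
          intro j _
          rw [mul_pow]
          congr 1
          rw [← pow_mul, ← pow_mul, mul_comm p (n+1)]
      _ = ∏ j, (1 + lam j^(n+1))^(2*p) := by
          apply Finset.prod_congr rfl
          intro j _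
          rw [sq_factor _ (habsz j), ← pow_mul, mul_comm 2 p]
      _ = ∏ j, ∑ k ∈ range (2*p+1), (((2*p).choose k : ℕ) : ℂ) * (lam j^(n+1))^k := by
          apply Finset.prod_congr rfl
          intro j _
          rw [add_comm (1:ℂ), add_pow]
          apply Finset.sum_congr rfl
          intro k _
          rw [one_pow, mul_one, mul_comm]
      _ = ∑ g ∈ G, ∏ j, ((((2*p).choose (g j) : ℕ) : ℂ) * (lam j^(n+1))^(g j)) := by
          rw [hGdef]; exact Finset.prod_univ_sum _ _
      _ = ∑ g ∈ G, (c g : ℂ) * (w g)^(n+1) := by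
          apply Finset.sum_congr rfl
          intro g _
          rw [Finset.prod_mul_distrib, hcdef, hwdef]
          push_cast
          congr 1
          rw [← Finset.prod_pow]
          apply Finset.prod_congr rfl
          intro j _
          rw [← pow_mul, ← pow_mul, mul_comm (n+1) (g j)]
  -- I2
  have I2 : ∀ (N : ℕ) (ν : ℂ), ∑ n ∈ range N, (Φ n : ℂ) * ν^(n+1)
      = ∑ g ∈ G, (c g : ℂ) * ∑ n ∈ range N, (w g * ν / W)^(n+1) := by
    intro N ν
    have hterm : ∀ n : ℕ, (Φ n : ℂ) * ν^(n+1) = ∑ g ∈ G, (c g : ℂ) * (w g * ν / W)^(n+1) := by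
      intro n
      have h1 : (Φ n : ℂ) * ν^(n+1) = ((Φ n : ℂ) * W^(n+1)) * (ν/W)^(n+1) := by
        rw [mul_assoc, ← mul_pow, mul_div_cancel₀ _ hWne]
      rw [h1, I1 n, Finset.sum_mul]
      apply Finset.sum_congr rfl
      intro g _
      rw [mul_assoc, ← mul_pow, mul_div_assoc]
    rw [Finset.sum_congr rfl (fun n _ => hterm n), Finset.sum_comm]
    apply Finset.sum_congr rfl
    intro g _
    rw [Finset.mul_sum]
  -- positivity facts
  have hc_nonneg : ∀ g, 0 ≤ c g := by
    intro g; rw [hcdef]; positivity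
  have hΦ0 : ∀ n, 0 ≤ Φ n := by
    intro n; rw [hΦdef]
    apply pow_nonneg
    apply Finset.prod_nonneg
    intro j _
    have h2 : Complex.abs (lam j ^ (n+1) - 1) ≤ 2 := by
      calc Complex.abs (lam j ^ (n+1) - 1)
          ≤ Complex.abs (lam j ^ (n+1)) + Complex.abs (1:ℂ) := AbsoluteValue.sub_le_add _ _ _
        _ = 2 := by rw [map_pow, hlam j, one_pow, map_one]; norm_num
    nlinarith [AbsoluteValue.nonneg Complex.abs (lam j ^ (n+1) - 1)]
  set η : ℝ := (4^r * ρ)^p with hηdef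
  have hη0 : 0 ≤ η := by rw [hηdef]; positivity
  have hΦbad : ∀ n : ℕ, (¬ ∀ j, Complex.abs (lam j ^ (n+1) - 1) < ε) → Φ n ≤ η := by
    intro n hn
    push_neg at hn
    obtain ⟨j₀, hj₀⟩ := hn
    have hfle : ∀ j, (4 - (Complex.abs (lam j ^ (n+1) - 1))^2) ≤ 4 := by
      intro j; nlinarith [AbsoluteValue.nonneg Complex.abs (lam j ^ (n+1) - 1)]
    have hf0 : ∀ j, 0 ≤ (4 - (Complex.abs (lam j ^ (n+1) - 1))^2) := by
      intro j
      have h2 : Complex.abs (lam j ^ (n+1) - 1) ≤ 2 := by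
        calc Complex.abs (lam j ^ (n+1) - 1)
            ≤ Complex.abs (lam j ^ (n+1)) + Complex.abs (1:ℂ) := AbsoluteValue.sub_le_add _ _ _
          _ = 2 := by rw [map_pow, hlam j, one_pow, map_one]; norm_num
      nlinarith [AbsoluteValue.nonneg Complex.abs (lam j ^ (n+1) - 1)]
    rw [hΦdef, hηdef]
    apply pow_le_pow_left₀ (Finset.prod_nonneg (fun j _ => hf0 j))
    have hr1 : 1 ≤ r := by have := j₀.isLt; omega
    calc ∏ j, (4 - (Complex.abs (lam j ^ (n+1) - 1))^2)
        = (4 - (Complex.abs (lam j₀ ^ (n+1) - 1))^2) *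
          ∏ j ∈ univ.erase j₀, (4 - (Complex.abs (lam j ^ (n+1) - 1))^2) := by
          rw [← Finset.mul_prod_erase univ _ (mem_univ j₀)]
      _ ≤ (4 - ε^2) * 4^(r-1) := by
          apply mul_le_mul
          · nlinarith [hj₀]
          · calc ∏ j ∈ univ.erase j₀, (4 - (Complex.abs (lam j ^ (n+1) - 1))^2)
                ≤ ∏ j ∈ univ.erase j₀, (4:ℝ) := Finset.prod_le_prod (fun j _ => hf0 j) (fun j _ => hfle j)
              _ = 4^(r-1) := by
                  rw [Finset.prod_const, Finset.card_erase_of_mem (mem_univ j₀), Finset.card_univ,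
                    Fintype.card_fin]
          · exact Finset.prod_nonneg (fun j _ => hf0 j)
          · nlinarith
      _ = 4^r * ρ := by
          rw [hρdef]
          have : (4:ℝ)^r = 4^(r-1) * 4 := by
            rw [← pow_succ]; congr 1; omega
          rw [this]; ring
  -- E3 : η ≤ c₀ / 8
  set c₀ : ℝ := (((2*p).choose p : ℕ) : ℝ)^r with hc₀def
  have hc₀pos : 0 < c₀ := by
    rw [hc₀def]
    apply pow_pos
    exact_mod_cast Nat.choose_pos (by omega)
  have hcg₀ : c (fun _ => p) = c₀ := by
    rw [hcdef, hc₀def]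
    simp only []
    rw [Finset.prod_const, Finset.card_univ, Fintype.card_fin]
  have hg₀G : (fun _ => p) ∈ G := by
    rw [hGdef, Fintype.mem_piFinset]
    intro j; rw [Finset.mem_range]; omega
  have h4p : (4:ℝ)^p ≤ (2*(p:ℝ)+1) * (((2*p).choose p : ℕ) : ℝ) := by
    have hnat : 4^p ≤ (2*p+1) * ((2*p).choose p) := by
      calc 4^p = 2^(2*p) := by rw [pow_mul]; norm_num
        _ = ∑ i ∈ range (2*p+1), (2*p).choose i := (Nat.sum_range_choose (2*p)).symm
        _ ≤ ∑ _i ∈ range (2*p+1), (2*p).choose p := by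
            apply Finset.sum_le_sum
            intro i _
            have := Nat.choose_le_middle i (2*p)
            rwa [Nat.mul_div_cancel_left p (by norm_num)] at this
        _ = (2*p+1) * ((2*p).choose p) := by
            rw [Finset.sum_const, Finset.card_range, smul_eq_mul]
    calc (4:ℝ)^p = ((4^p : ℕ) : ℝ) := by push_cast; ring
      _ ≤ (((2*p+1) * ((2*p).choose p) : ℕ) : ℝ) := by exact_mod_cast hnat
      _ = (2*(p:ℝ)+1) * (((2*p).choose p : ℕ) : ℝ) := by push_cast; ring
  have E3 : η ≤ c₀ / 8 := by
    have h1 : η = ((4:ℝ)^p)^r * ρ^p := by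
      rw [hηdef, mul_pow, ← pow_mul, ← pow_mul, mul_comm r p]
    rw [h1]
    calc ((4:ℝ)^p)^r * ρ^p ≤ ((2*(p:ℝ)+1) * (((2*p).choose p : ℕ) : ℝ))^r * ρ^p := by
          apply mul_le_mul_of_nonneg_right _ (by positivity)
          apply pow_le_pow_left₀ (by positivity) h4p
      _ = ((2*(p:ℝ)+1))^r * ρ^p * c₀ := by rw [mul_pow, hc₀def]; ring
      _ ≤ (1/8) * c₀ := by
          apply mul_le_mul_of_nonneg_right (le_of_lt hp) (le_of_lt hc₀pos)
      _ = c₀ / 8 := by ring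
  -- E1
  set K₀ : ℝ := ∑ g ∈ G.filter (fun g => w g / W ≠ 1), c g * (2 / Complex.abs (w g / W - 1))
    with hK₀def
  have hK₀0 : 0 ≤ K₀ := by
    rw [hK₀def]
    apply Finset.sum_nonneg
    intro g _
    apply mul_nonneg (hc_nonneg g) (by positivity)
  have habsu : ∀ g (ν : ℂ), Complex.abs ν = 1 → Complex.abs (w g * ν / W) = 1 := by
    intro g ν hν
    rw [map_div₀, map_mul, habsw, hν, habsW]; norm_num
  have E1 : ∀ N : ℕ, (N:ℝ) * c₀ - K₀ ≤ ∑ n ∈ range N, Φ n := by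
    intro N
    have h0 := I2 N 1
    have hL : (∑ n ∈ range N, (Φ n : ℂ) * (1:ℂ)^(n+1)) = ((∑ n ∈ range N, Φ n : ℝ) : ℂ) := by
      push_cast
      apply Finset.sum_congr rfl
      intro n _; rw [one_pow, mul_one]
    rw [hL] at h0
    have hre := congrArg Complex.re h0
    rw [Complex.ofReal_re, Complex.re_sum] at hre
    rw [hre]
    have hsplit := Finset.sum_filter_add_sum_filter_not G (fun g => w g / W = 1)
      (fun g => ((c g : ℂ) * ∑ n ∈ range N, (w g * 1 / W)^(n+1)).re)
    rw [← hsplit]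
    have hA : (N:ℝ) * c₀ ≤ ∑ g ∈ G.filter (fun g => w g / W = 1),
        ((c g : ℂ) * ∑ n ∈ range N, (w g * 1 / W)^(n+1)).re := by
      have hterm : ∀ g ∈ G.filter (fun g => w g / W = 1),
          ((c g : ℂ) * ∑ n ∈ range N, (w g * 1 / W)^(n+1)).re = c g * N := by
        intro g hg
        rw [Finset.mem_filter] at hg
        rw [mul_one, hg.2]
        simp
      rw [Finset.sum_congr rfl hterm]
      have hg₀mem : (fun _ => p) ∈ G.filter (fun g => w g / W = 1) := by
        rw [Finset.mem_filter]
        refine ⟨hg₀G, ?_⟩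
        rw [hwdef, hWdef]
        exact div_self hWne
      calc (N:ℝ) * c₀ = c (fun _ => p) * N := by rw [hcg₀]; ring
        _ ≤ ∑ g ∈ G.filter (fun g => w g / W = 1), c g * N :=
            Finset.single_le_sum (fun g _ => mul_nonneg (hc_nonneg g) (Nat.cast_nonneg N)) hg₀mem
    have hB : -K₀ ≤ ∑ g ∈ G.filter (fun g => ¬ w g / W = 1),
        ((c g : ℂ) * ∑ n ∈ range N, (w g * 1 / W)^(n+1)).re := by
      rw [hK₀def, ← Finset.sum_neg_distrib]
      apply Finset.sum_le_sum
      intro g hg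
      rw [Finset.mem_filter] at hg
      have hu1 : Complex.abs (w g / W) = 1 := by
        have := habsu g 1 (map_one Complex.abs)
        rwa [mul_one] at this
      have hgb := geom_bound _ hu1 hg.2 N
      have habs' : Complex.abs ((c g : ℂ) * ∑ n ∈ range N, (w g * 1 / W)^(n+1))
          ≤ c g * (2 / Complex.abs (w g / W - 1)) := by
        rw [map_mul, Complex.abs_ofReal, _root_.abs_of_nonneg (hc_nonneg g), mul_one]
        exact mul_le_mul_of_nonneg_left hgb (hc_nonneg g)
      have h2 := Complex.abs_re_le_abs ((c g : ℂ) * ∑ n ∈ range N, (w g * 1 / W)^(n+1))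
      exact (abs_le.mp (h2.trans habs')).1
    linarith
  -- E2
  have E2 : ∀ N : ℕ, (7/8) * (∑ n ∈ range N, Φ n) - 2 * N * η
      ≤ (∑ n ∈ range N, (Φ n : ℂ) * μ₀^(n+1)).re := by
    intro N
    rw [Complex.re_sum]
    have hterm : ∀ n ∈ range N, (7/8) * Φ n - 2 * η ≤ ((Φ n : ℂ) * μ₀^(n+1)).re := by
      intro n _
      rw [Complex.re_ofReal_mul]
      have habsμn : Complex.abs (μ₀^(n+1)) = 1 := by rw [map_pow, hμ₀, one_pow]
      by_cases hn : ∀ j, Complex.abs (lam j ^ (n+1) - 1) < ε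
      · have h78 := re_lower _ habsμn (H n hn)
        nlinarith [hΦ0 n, hη0]
      · have hb := hΦbad n hn
        have hre := re_neg_lower _ habsμn
        have h1 := Complex.abs_re_le_abs (μ₀^(n+1))
        rw [habsμn] at h1
        have h2 := (abs_le.mp h1).2
        nlinarith [hΦ0 n]
    calc (7/8) * (∑ n ∈ range N, Φ n) - 2 * N * η
        = ∑ n ∈ range N, ((7/8) * Φ n - 2 * η) := by
          rw [Finset.sum_sub_distrib, ← Finset.mul_sum, Finset.sum_const, Finset.card_range,
            nsmul_eq_mul]
          ring
      _ ≤ ∑ n ∈ range N, ((Φ n : ℂ) * μ₀^(n+1)).re := Finset.sum_le_sum hterm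
  -- case analysis
  by_cases hcase : ∃ g ∈ G, w g * μ₀ / W = 1
  · obtain ⟨g, _, hg⟩ := hcase
    apply hc (fun j => (p:ℤ) - (g j : ℤ))
    have hμval : μ₀ = W / w g := by
      rw [eq_div_iff (hwne g)]
      rw [div_eq_one_iff_eq hWne] at hg
      linear_combination hg
    rw [hμval, hWdef, hwdef, ← Finset.prod_div_distrib]
    apply Finset.prod_congr rfl
    intro j _
    rw [zpow_sub₀ (hlamne j), zpow_natCast, zpow_natCast]
  · push_neg at hcase
    -- E4
    set K₁ : ℝ := ∑ g ∈ G, c g * (2 / Complex.abs (w g * μ₀ / W - 1)) with hK₁def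
    have hK₁0 : 0 ≤ K₁ := by
      rw [hK₁def]
      apply Finset.sum_nonneg
      intro g _
      exact mul_nonneg (hc_nonneg g)
        (div_nonneg (by norm_num) (AbsoluteValue.nonneg Complex.abs _))
    have E4 : ∀ N : ℕ, Complex.abs (∑ n ∈ range N, (Φ n : ℂ) * μ₀^(n+1)) ≤ K₁ := by
      intro N
      rw [I2 N μ₀, hK₁def]
      calc Complex.abs (∑ g ∈ G, (c g : ℂ) * ∑ n ∈ range N, (w g * μ₀ / W)^(n+1))
          ≤ ∑ g ∈ G, Complex.abs ((c g : ℂ) * ∑ n ∈ range N, (w g * μ₀ / W)^(n+1)) := by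
            exact AbsoluteValue.sum_le _ _ _
        _ ≤ ∑ g ∈ G, c g * (2 / Complex.abs (w g * μ₀ / W - 1)) := by
            apply Finset.sum_le_sum
            intro g hg
            rw [map_mul, Complex.abs_ofReal, _root_.abs_of_nonneg (hc_nonneg g)]
            exact mul_le_mul_of_nonneg_left
              (geom_bound _ (habsu g μ₀ hμ₀) (hcase g hg) N) (hc_nonneg g)
    -- finale
    clear_value Φ G c w W ρ η c₀ K₀ K₁
    have h5c : (0:ℝ) < 5 * c₀ := by linarith
    obtain ⟨N, hN⟩ := exists_nat_gt ((K₀ + K₁ + 1) * 8 / (5 * c₀))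
    have hN5 : K₀ + K₁ + 1 < (5/8) * N * c₀ := by
      have h6 := (div_lt_iff₀ h5c).mp hN
      nlinarith
    have hE1 := E1 N
    have hE2 := E2 N
    have hE4 := E4 N
    have hreabs := Complex.re_le_abs (∑ n ∈ range N, (Φ n : ℂ) * μ₀^(n+1))
    have hNη : 2 * (N:ℝ) * η ≤ 2 * N * (c₀/8) := by
      have h2N : (0:ℝ) ≤ 2 * N := by positivity
      nlinarith
    linarith

open Complex Finset Real

/-- A set of naturals is `r`-Bohr if it is a recurrence set for every product of
`r` rotations of the unit circle. -/
def IsRBohr (r : ℕ) (S : Set ℕ) : Prop :=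
  ∀ lam : Fin r → ℂ, (∀ i, ‖lam i‖ = 1) →
    ∀ ε : ℝ, 0 < ε → ∃ n ∈ S, ∀ i, ‖lam i ^ n - 1‖ < ε

theorem stmt_13 (r : ℕ) (hr : 1 ≤ r) :
    ∃ S : Set ℕ, (∀ n ∈ S, 0 < n) ∧ IsRBohr r S ∧
      ∃ (μ : Fin (2 ^ (r - 1) + 1) → ℂ) (δ : ℝ),
        (∀ i, ‖μ i‖ = 1) ∧ 0 < δ ∧
        ∀ n ∈ S, ∃ i, δ ≤ ‖μ i ^ n - 1‖ := by
  have hr2 : r + 1 ≤ 2^(r-1) + 1 := by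
    have h2 := Nat.lt_two_pow_self (n := r-1)
    omega
  set θ : ℝ := liouvilleNumber 3 with hθdef
  have htrZ : Transcendental ℤ θ := transcendental_liouvilleNumber (by norm_num)
  have htr : Transcendental ℚ θ := fun halg =>
    htrZ ((IsFractionRing.isAlgebraic_iff ℤ ℚ ℝ).mpr halg)
  set μ' : Fin (r+1) → ℂ :=
    fun i => Complex.exp (((2 * π * θ^((i:ℕ)+1) : ℝ) : ℂ) * Complex.I) with hμ'def
  have habsμ' : ∀ i, Complex.abs (μ' i) = 1 := fun i => Complex.norm_exp_ofReal_mul_I _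
  refine ⟨{n : ℕ | 0 < n ∧ ∃ i : Fin (r+1), 1/2 ≤ Complex.abs (μ' i ^ n - 1)},
    fun n hn => hn.1, ?_, ?_⟩
  · -- IsRBohr
    intro lam hlam ε hε
    by_contra hcon
    push_neg at hcon
    set ε' : ℝ := min ε 1 with hε'def
    have hε'pos : 0 < ε' := lt_min hε one_pos
    have hε'1 : ε' ≤ 1 := min_le_right _ _
    have H : ∀ i₀ : Fin (r+1), ∀ n : ℕ,
        (∀ j, Complex.abs (lam j ^ (n+1) - 1) < ε') →
        Complex.abs (μ' i₀ ^ (n+1) - 1) < 1/2 := by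
      intro i₀ n hn
      by_contra hge
      push_neg at hge
      obtain ⟨j, hj⟩ := hcon (n+1) ⟨n.succ_pos, i₀, hge⟩
      exact absurd ((hn j).trans_le (min_le_left _ _)) (not_lt.mpr hj)
    apply span_contra r θ htr (fun j => (lam j).arg / (2 * π))
    intro i₀
    obtain ⟨m, hm⟩ := key lam hlam (μ' i₀) (habsμ' i₀) ε' hε'pos hε'1 (H i₀)
    refine ⟨m, ?_⟩
    -- convert the product into an exponential
    have hlamexp : ∀ j, lam j = Complex.exp (((lam j).arg : ℂ) * Complex.I) := by
      intro j
      conv_lhs => rw [← Complex.norm_mul_exp_arg_mul_I (lam j)]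
      rw [hlam j, Complex.ofReal_one, one_mul]
    have hprod : (∏ j, lam j ^ (m j))
        = Complex.exp (∑ j, (m j : ℂ) * (((lam j).arg : ℂ) * Complex.I)) := by
      rw [Complex.exp_sum]
      apply Finset.prod_congr rfl
      intro j _
      rw [Complex.exp_int_mul, ← hlamexp j]
    rw [hprod] at hm
    rw [Complex.exp_eq_exp_iff_exists_int] at hm
    obtain ⟨z, hz⟩ := hm
    refine ⟨z, ?_⟩
    -- take imaginary parts
    have him := congrArg Complex.im hz
    simp only [Complex.add_im, Complex.im_sum, Complex.mul_im, Complex.ofReal_re,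
      Complex.ofReal_im, Complex.I_re, Complex.I_im, Complex.intCast_re, Complex.intCast_im,
      Complex.mul_re, Complex.re_sum, Complex.ofReal_mul, Complex.re_ofNat,
      Complex.im_ofNat] at him
    ring_nf at him
    have hπ : (π:ℝ) ≠ 0 := Real.pi_ne_zero
    have hsum : ∑ j, (m j:ℝ) * ((lam j).arg / (2*π)) = (∑ j, (m j:ℝ) * (lam j).arg) / (2*π) := by
      rw [Finset.sum_div]
      apply Finset.sum_congr rfl
      intro j _
      ring
    rw [hsum, pow_succ]
    field_simp
    ring_nf
    linarith [him]
  · -- not Bohr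
    refine ⟨fun i => μ' ⟨min (i:ℕ) r, by omega⟩, 1/2, fun i => habsμ' _, by norm_num, ?_⟩
    rintro n ⟨-, i₀, hi₀⟩
    refine ⟨⟨(i₀:ℕ), by omega⟩, ?_⟩
    have : (⟨min ((⟨(i₀:ℕ), by omega⟩ : Fin (2^(r-1)+1)):ℕ) r, by omega⟩ : Fin (r+1)) = i₀ := by
      apply Fin.ext
      simp only []
      have := i₀.isLt
      omega
    simp only [this]
    exact hi₀
end

section
/- If a set S ⊆ ℕ is not a topological recurrence set (Birkhoff set), witnessed by a minimal compact system (X, d, f) and ε > 0 with d(f^n(x), x) ≥ ε for all n ∈ S and x ∈ X, and m is an f-invariant Borel probability measure of full support on X, then there exists a nonempty open U ⊆ X with m(U) > 0 and m(f^{-n}U ∩ U) = 0 for all n ∈ S; hence S is not a Poincaré set. -/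
open MeasureTheory

theorem stmt_16 (S : Set ℕ)
    (X : Type) [MetricSpace X] [CompactSpace X] [Nonempty X]
    [MeasurableSpace X] [BorelSpace X]
    (f : X → X) (hf : Continuous f)
    (hmin : ∀ F : Set X, IsClosed F → F.Nonempty → f '' F ⊆ F → F = Set.univ)
    (ε : ℝ) (hε : 0 < ε)
    (hnonrec : ∀ n ∈ S, ∀ x : X, ε ≤ dist (f^[n] x) x)
    (m : Measure X) [IsProbabilityMeasure m]
    (hinv : ∀ A : Set X, MeasurableSet A → m (f ⁻¹' A) = m A)
    (hsupp : ∀ U : Set X, IsOpen U → U.Nonempty → 0 < m U) :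
    (∃ U : Set X, IsOpen U ∧ U.Nonempty ∧ 0 < m U ∧
      ∀ n ∈ S, m (f^[n] ⁻¹' U ∩ U) = 0) ∧
    ¬ (∀ (Y : Type) [MeasurableSpace Y] (ν : Measure Y),
        IsProbabilityMeasure ν → ∀ T : Y → Y, Measurable T →
          MeasurePreserving T ν ν →
          ∀ A : Set Y, MeasurableSet A → 0 < ν A →
            ∃ n ∈ S, 0 < ν (T^[n] ⁻¹' A ∩ A)) := by
  obtain ⟨x₀⟩ := ‹Nonempty X›
  set U := Metric.ball x₀ (ε / 2) with hU
  have hUopen : IsOpen U := Metric.isOpen_ball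
  have hUne : U.Nonempty := ⟨x₀, Metric.mem_ball_self (by linarith)⟩
  have hempty : ∀ n ∈ S, (f^[n] ⁻¹' U ∩ U) = ∅ := by
    intro n hn
    ext y
    simp only [Set.mem_inter_iff, Set.mem_preimage, Set.mem_empty_iff_false, iff_false]
    rintro ⟨h1, h2⟩
    have := hnonrec n hn y
    have h1' : dist (f^[n] y) x₀ < ε / 2 := h1
    have h2' : dist y x₀ < ε / 2 := h2
    have : dist (f^[n] y) y ≤ dist (f^[n] y) x₀ + dist x₀ y := dist_triangle _ _ _
    rw [dist_comm x₀ y] at this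
    linarith [hnonrec n hn y]
  have hzero : ∀ n ∈ S, m (f^[n] ⁻¹' U ∩ U) = 0 := by
    intro n hn; rw [hempty n hn]; simp
  refine ⟨⟨U, hUopen, hUne, hsupp U hUopen hUne, hzero⟩, ?_⟩
  intro h
  have hmp : MeasurePreserving f m m := by
    refine ⟨hf.measurable, ?_⟩
    ext A hA
    rw [Measure.map_apply hf.measurable hA]
    exact hinv A hA
  obtain ⟨n, hn, hpos⟩ := h X m ‹_› f hf.measurable hmp U hUopen.measurableSet
    (hsupp U hUopen hUne)
  rw [hzero n hn] at hpos
  exact lt_irrefl 0 hpos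
end
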